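/- arXiv:2301.05473 — 8 statements merged into one kernel-verified Lean document; each statement's English description precedes it below -/
import Mathlib

section
/- Let ρ(t) = ∫₀¹ n(t,x) dx be the total tumour mass of a nonnegative solution of the tumour equation ∂n/∂t(t,x) = [r(x) − d(x)ρ(t) − μ(x)φ(t)] n(t,x) on t > 0, x ∈ [0,1], where φ(t) ≥ 0 for all t. Then limsup_{t→∞} ρ(t) ≤ ρ⋆ := max_{x∈[0,1]} r(x)/d(x). -/
open MeasureTheory Set Filter

/-- Bound on the limsup of the total tumour mass: limsup ρ(t) ≤ ρ⋆ = max r/d. -/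
theorem tumour_mass_limsup_bound
    (n : ℝ → ℝ → ℝ) (r d μ : ℝ → ℝ) (ρ φ : ℝ → ℝ) (ρstar : ℝ)
    (hrc : ContinuousOn r (Set.Icc 0 1)) (hdc : ContinuousOn d (Set.Icc 0 1))
    (hμc : ContinuousOn μ (Set.Icc 0 1))
    (hrpos : ∀ x ∈ Set.Icc (0:ℝ) 1, 0 < r x)
    (hdpos : ∀ x ∈ Set.Icc (0:ℝ) 1, 0 < d x)
    (hμpos : ∀ x ∈ Set.Icc (0:ℝ) 1, 0 < μ x)
    (hφc : Continuous φ) (hφnn : ∀ t, 0 ≤ φ t)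
    (hnnn : ∀ t ≥ (0:ℝ), ∀ x ∈ Set.Icc (0:ℝ) 1, 0 ≤ n t x)
    (hncont : ∀ t ≥ (0:ℝ), ContinuousOn (n t) (Set.Icc 0 1))
    (hnode : ∀ x ∈ Set.Icc (0:ℝ) 1, ∀ t > (0:ℝ),
      HasDerivAt (fun s => n s x) ((r x - d x * ρ t - μ x * φ t) * n t x) t)
    (hρdef : ∀ t, ρ t = ∫ x in (0:ℝ)..1, n t x)
    (hρstar : IsGreatest ((fun x => r x / d x) '' Set.Icc (0:ℝ) 1) ρstar) :
    ∀ ε > 0, ∀ᶠ t in Filter.atTop, ρ t ≤ ρstar + ε := by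
  intro ε hε
  have hne : (Set.Icc (0:ℝ) 1).Nonempty := ⟨0, by norm_num⟩
  -- extrema of the coefficient functions
  obtain ⟨xr, hxr, hxrM⟩ := isCompact_Icc.exists_isMaxOn hne hrc
  obtain ⟨xd, hxd, hxdm⟩ := isCompact_Icc.exists_isMinOn hne hdc
  obtain ⟨xD, hxD, hxDM⟩ := isCompact_Icc.exists_isMaxOn hne hdc
  obtain ⟨xμ, hxμ, hxμM⟩ := isCompact_Icc.exists_isMaxOn hne hμc
  set rM := r xr with hrMdef
  set dm := d xd with hdmdef
  set dM := d xD with hdMdef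
  set μM := μ xμ with hμMdef
  have hrM : ∀ y ∈ Set.Icc (0:ℝ) 1, r y ≤ rM := fun y hy => hxrM hy
  have hdm : ∀ y ∈ Set.Icc (0:ℝ) 1, dm ≤ d y := fun y hy => hxdm hy
  have hdM : ∀ y ∈ Set.Icc (0:ℝ) 1, d y ≤ dM := fun y hy => hxDM hy
  have hμM : ∀ y ∈ Set.Icc (0:ℝ) 1, μ y ≤ μM := fun y hy => hxμM hy
  have hrM0 : 0 < rM := hrpos xr hxr
  have hdm0 : 0 < dm := hdpos xd hxd
  have hdM0 : 0 < dM := hdpos xD hxD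
  have hμM0 : 0 < μM := hμpos xμ hxμ
  have hρstarpos : 0 < ρstar := by
    obtain ⟨x₀, hx₀, he⟩ := hρstar.1
    rw [← he]; exact div_pos (hrpos x₀ hx₀) (hdpos x₀ hx₀)
  -- nonnegativity of ρ
  have hρnn : ∀ t, 0 ≤ t → 0 ≤ ρ t := by
    intro t ht
    rw [hρdef]
    exact intervalIntegral.integral_nonneg zero_le_one (fun x hx => hnnn t ht x hx)
  have hIoc : Set.uIoc (0:ℝ) 1 = Set.Ioc 0 1 := Set.uIoc_of_le zero_le_one
  have hnint : ∀ s, 0 ≤ s → IntervalIntegrable (n s) volume 0 1 := by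
    intro s hs
    apply ContinuousOn.intervalIntegrable
    rw [Set.uIcc_of_le zero_le_one]
    exact hncont s hs
  -- growth bound: n s x ≤ n t₀ x e^{rM (s - t₀)}
  have hgrow : ∀ x ∈ Set.Icc (0:ℝ) 1, ∀ t₀, 0 < t₀ → ∀ s, t₀ ≤ s →
      n s x * Real.exp (-rM * s) ≤ n t₀ x * Real.exp (-rM * t₀) := by
    intro x hx t₀ ht₀ s hs
    have hderiv : ∀ u ∈ Set.Ioo t₀ s, HasDerivAt (fun u => n u x * Real.exp (-rM * u))
        ((r x - d x * ρ u - μ x * φ u) * n u x * Real.exp (-rM * u)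
          + n u x * (Real.exp (-rM * u) * (-rM * 1))) u := by
      intro u hu
      exact (hnode x hx u (ht₀.trans hu.1)).mul (((hasDerivAt_id u).const_mul (-rM)).exp)
    have hanti : AntitoneOn (fun u => n u x * Real.exp (-rM * u)) (Set.Icc t₀ s) := by
      apply antitoneOn_of_deriv_nonpos (convex_Icc _ _)
      · intro u hu
        have hu0 : (0:ℝ) < u := lt_of_lt_of_le ht₀ hu.1
        exact (((hnode x hx u hu0).continuousAt).mul
          ((Real.continuous_exp.comp (continuous_const.mul continuous_id)).continuousAt)).continuousWithinAt
      · rw [interior_Icc]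
        intro u hu
        exact ((hderiv u hu).differentiableAt).differentiableWithinAt
      · rw [interior_Icc]
        intro u hu
        rw [(hderiv u hu).deriv]
        have hu0 : (0:ℝ) < u := lt_of_lt_of_le ht₀ hu.1.le
        have hnn : 0 ≤ n u x := hnnn u hu0.le x hx
        have hE : 0 < Real.exp (-rM * u) := Real.exp_pos _
        have ha : r x - d x * ρ u - μ x * φ u ≤ rM := by
          have h1 : 0 ≤ d x * ρ u := mul_nonneg (hdpos x hx).le (hρnn u hu0.le)
          have h2 : 0 ≤ μ x * φ u := mul_nonneg (hμpos x hx).le (hφnn u)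
          have h3 := hrM x hx
          linarith
        nlinarith [mul_nonneg (mul_nonneg hnn hE.le) (sub_nonneg.mpr ha)]
    exact hanti (Set.left_mem_Icc.mpr hs) (Set.right_mem_Icc.mpr hs) hs
  -- the key derivative computation
  have hkey : ∀ t, 0 < t → ∃ D, HasDerivAt ρ D t ∧
      IntervalIntegrable (fun x => (r x - d x * ρ t - μ x * φ t) * n t x) volume 0 1 ∧
      D = ∫ x in (0:ℝ)..1, (r x - d x * ρ t - μ x * φ t) * n t x := by
    intro t ht
    set t₀ := t / 2 with ht₀def
    set T := t + 1 with hTdef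
    have ht₀ : 0 < t₀ := by positivity
    have ht₀T : t₀ ≤ T := by rw [ht₀def, hTdef]; linarith
    set δ := min (t / 2) 1 with hδdef
    have hδpos : 0 < δ := by positivity
    have hball : Metric.ball t δ ⊆ Set.Icc t₀ T := by
      intro s hs
      rw [Metric.mem_ball, Real.dist_eq, abs_sub_lt_iff] at hs
      have h1 : δ ≤ t / 2 := min_le_left _ _
      have h2 : δ ≤ 1 := min_le_right _ _
      constructor
      · rw [ht₀def]; linarith [hs.2]
      · rw [hTdef]; linarith [hs.1]
    obtain ⟨xB, hxB, hB⟩ := isCompact_Icc.exists_isMaxOn hne (hncont t₀ ht₀.le)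
    set B := n t₀ xB with hBdef
    have hB0 : 0 ≤ B := hnnn t₀ ht₀.le xB hxB
    set N := B * Real.exp (rM * (T - t₀)) with hNdef
    have hN0 : 0 ≤ N := by positivity
    have hNb : ∀ s ∈ Set.Icc t₀ T, ∀ x ∈ Set.Icc (0:ℝ) 1, n s x ≤ N := by
      intro s hs x hx
      have h1 := hgrow x hx t₀ ht₀ s hs.1
      have hEs : 0 < Real.exp (-rM * s) := Real.exp_pos _
      rw [← mul_le_mul_iff_of_pos_right hEs]
      calc n s x * Real.exp (-rM * s) ≤ n t₀ x * Real.exp (-rM * t₀) := h1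
        _ ≤ B * Real.exp (-rM * t₀) :=
            mul_le_mul_of_nonneg_right (hB hx) (Real.exp_pos _).le
        _ ≤ N * Real.exp (-rM * s) := by
            rw [hNdef, mul_assoc, ← Real.exp_add]
            apply mul_le_mul_of_nonneg_left _ hB0
            apply Real.exp_le_exp.mpr
            nlinarith [hs.2, hrM0]
    have hρb : ∀ s ∈ Set.Icc t₀ T, ρ s ≤ N := by
      intro s hs
      rw [hρdef]
      have := intervalIntegral.integral_mono_on zero_le_one
        (hnint s (le_trans ht₀.le hs.1)) intervalIntegrable_const (fun x hx => hNb s hs x hx)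
      simpa using this
    obtain ⟨sφ, hsφ, hφB⟩ := isCompact_Icc.exists_isMaxOn (Set.nonempty_Icc.mpr ht₀T)
      hφc.continuousOn
    set φB := φ sφ with hφBdef
    have hφB0 : 0 ≤ φB := hφnn sφ
    set K := rM + dM * N + μM * φB with hKdef
    have hK0 : 0 ≤ K := by positivity
    have hK : ∀ s ∈ Set.Icc t₀ T, ∀ x ∈ Set.Icc (0:ℝ) 1,
        |r x - d x * ρ s - μ x * φ s| ≤ K := by
      intro s hs x hx
      have hρs0 : 0 ≤ ρ s := hρnn s (le_trans ht₀.le hs.1)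
      have hρsN : ρ s ≤ N := hρb s hs
      have hφs0 : 0 ≤ φ s := hφnn s
      have hφsB : φ s ≤ φB := hφB hs
      have h1 : 0 ≤ d x * ρ s := mul_nonneg (hdpos x hx).le hρs0
      have h2 : 0 ≤ μ x * φ s := mul_nonneg (hμpos x hx).le hφs0
      have h3 : d x * ρ s ≤ dM * N :=
        mul_le_mul (hdM x hx) hρsN hρs0 hdM0.le
      have h4 : μ x * φ s ≤ μM * φB :=
        mul_le_mul (hμM x hx) hφsB hφs0 hμM0.le
      have h5 := hrM x hx
      have h6 := (hrpos x hx).le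
      rw [abs_le]
      refine ⟨by rw [hKdef]; linarith, by rw [hKdef]; linarith⟩
    have main := intervalIntegral.hasDerivAt_integral_of_dominated_loc_of_deriv_le
      (F := fun s x => n s x)
      (F' := fun s x => (r x - d x * ρ s - μ x * φ s) * n s x)
      (bound := fun _ => K * N) (a := (0:ℝ)) (b := 1) (x₀ := t) (μ := volume) (Metric.ball_mem_nhds t hδpos)
      ?_ ?_ ?_ ?_ ?_ ?_
    · refine ⟨_, ?_, main.1, rfl⟩
      exact main.2.congr_of_eventuallyEq (Filter.Eventually.of_forall fun s => hρdef s)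
    · rw [hIoc]
      filter_upwards [Ioi_mem_nhds ht] with s hs
      exact ((hncont s (le_of_lt hs)).mono Set.Ioc_subset_Icc_self).aestronglyMeasurable
        measurableSet_Ioc
    · exact hnint t ht.le
    · rw [hIoc]
      apply ContinuousOn.aestronglyMeasurable _ measurableSet_Ioc
      exact (((hrc.sub (hdc.mul continuousOn_const)).sub
        (hμc.mul continuousOn_const)).mul (hncont t ht.le)).mono Set.Ioc_subset_Icc_self
    · refine MeasureTheory.ae_of_all _ (fun x hx s hs => ?_)
      have hx' : x ∈ Set.Icc (0:ℝ) 1 := by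
        rw [hIoc] at hx; exact Set.Ioc_subset_Icc_self hx
      have hsI : s ∈ Set.Icc t₀ T := hball hs
      have hs0 : (0:ℝ) ≤ s := le_trans ht₀.le hsI.1
      simp only [Real.norm_eq_abs, abs_mul, abs_of_nonneg (hnnn s hs0 x hx')]
      exact mul_le_mul (hK s hsI x hx') (hNb s hsI x hx') (hnnn s hs0 x hx') hK0
    · exact intervalIntegrable_const
    · refine MeasureTheory.ae_of_all _ (fun x hx s hs => ?_)
      have hx' : x ∈ Set.Icc (0:ℝ) 1 := by
        rw [hIoc] at hx; exact Set.Ioc_subset_Icc_self hx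
      have hs0 : (0:ℝ) < s := lt_of_lt_of_le ht₀ (hball hs).1
      exact hnode x hx' s hs0
  -- derivative bound when ρ is large, and differentiability
  set c := dm * ε * (ρstar + ε) with hcdef
  have hc : 0 < c := by positivity
  have hdiffat : ∀ t, 0 < t → DifferentiableAt ℝ ρ t := by
    intro t ht
    obtain ⟨D, hD, -, -⟩ := hkey t ht
    exact hD.differentiableAt
  have hcont : ∀ s, 0 < s → ContinuousAt ρ s := fun s hs => (hdiffat s hs).continuousAt
  have hderivle : ∀ t, 0 < t → ρstar + ε ≤ ρ t → deriv ρ t ≤ -c := by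
    intro t ht hge
    obtain ⟨D, hD, hint, hDeq⟩ := hkey t ht
    rw [hD.deriv, hDeq]
    have hint2 : IntervalIntegrable (fun x => -(dm * ε) * n t x) volume 0 1 := by
      apply ContinuousOn.intervalIntegrable
      rw [Set.uIcc_of_le zero_le_one]
      exact continuousOn_const.mul (hncont t ht.le)
    have hmono : (∫ x in (0:ℝ)..1, (r x - d x * ρ t - μ x * φ t) * n t x)
        ≤ ∫ x in (0:ℝ)..1, -(dm * ε) * n t x := by
      apply intervalIntegral.integral_mono_on zero_le_one hint hint2
      intro x hx
      have h1 : r x ≤ ρstar * d x := (div_le_iff₀ (hdpos x hx)).mp (hρstar.2 ⟨x, hx, rfl⟩)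
      have hA : d x * (ρstar + ε) ≤ d x * ρ t := mul_le_mul_of_nonneg_left hge (hdpos x hx).le
      have hB : dm * ε ≤ d x * ε := mul_le_mul_of_nonneg_right (hdm x hx) hε.le
      have hμφ : 0 ≤ μ x * φ t := mul_nonneg (hμpos x hx).le (hφnn t)
      have ha : r x - d x * ρ t - μ x * φ t ≤ -(dm * ε) := by nlinarith
      exact mul_le_mul_of_nonneg_right ha (hnnn t ht.le x hx)
    have heval : (∫ x in (0:ℝ)..1, -(dm * ε) * n t x) = -(dm * ε) * ρ t := by
      rw [intervalIntegral.integral_const_mul, ← hρdef]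
    rw [heval] at hmono
    have hfinal : -(dm * ε) * ρ t ≤ -c := by
      rw [hcdef]
      nlinarith [mul_nonneg (mul_pos hdm0 hε).le (sub_nonneg.mpr hge)]
    linarith
  -- there is a time t₁ ≥ 1 with ρ t₁ ≤ ρstar + ε
  have hex : ∃ t₁, 1 ≤ t₁ ∧ ρ t₁ ≤ ρstar + ε := by
    by_contra hcon
    push_neg at hcon
    set T := (ρ 1 + c) / c + 1 with hT
    have hρ1 : 0 ≤ ρ 1 := hρnn 1 zero_le_one
    have hfrac : 0 ≤ (ρ 1 + c) / c := by positivity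
    have hT1 : 1 ≤ T := by rw [hT]; linarith
    have hanti : AntitoneOn (fun u => ρ u + c * u) (Set.Icc 1 T) := by
      apply antitoneOn_of_deriv_nonpos (convex_Icc _ _)
      · intro u hu
        have hu0 : (0:ℝ) < u := lt_of_lt_of_le zero_lt_one hu.1
        exact ((hcont u hu0).add
          ((continuous_const.mul continuous_id).continuousAt)).continuousWithinAt
      · rw [interior_Icc]
        intro u hu
        have hu0 : (0:ℝ) < u := lt_of_lt_of_le zero_lt_one hu.1.le
        exact ((hdiffat u hu0).add
          (((hasDerivAt_id u).const_mul c).differentiableAt)).differentiableWithinAt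
      · rw [interior_Icc]
        intro u hu
        have hu0 : (0:ℝ) < u := lt_of_lt_of_le zero_lt_one hu.1.le
        have hder : deriv (fun u => ρ u + c * u) u = deriv ρ u + c := by
          have h2 : HasDerivAt (fun u => ρ u + c * u) (deriv ρ u + c * 1) u :=
            (hdiffat u hu0).hasDerivAt.add ((hasDerivAt_id u).const_mul c)
          simpa using h2.deriv
        rw [hder]
        have := hderivle u hu0 (hcon u hu.1.le).le
        linarith
    have h2 := hanti (Set.left_mem_Icc.mpr hT1) (Set.right_mem_Icc.mpr hT1) hT1
    simp only at h2
    have h3 : 0 ≤ ρ T := hρnn T (by linarith)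
    have h4 : c * T = ρ 1 + c + c := by
      rw [hT]; field_simp
    rw [h4] at h2
    linarith
  obtain ⟨t₁, ht₁, hρt₁⟩ := hex
  rw [Filter.eventually_atTop]
  refine ⟨t₁, fun t₂ ht₂ => ?_⟩
  by_contra hgt
  push_neg at hgt
  have ht₁₂ : t₁ < t₂ := lt_of_le_of_ne ht₂ (by rintro rfl; linarith)
  set S := Set.Icc t₁ t₂ ∩ ρ ⁻¹' Set.Iic (ρstar + ε) with hSdef
  have hcontOn : ContinuousOn ρ (Set.Icc t₁ t₂) := fun u hu =>
    (hcont u (lt_of_lt_of_le zero_lt_one (le_trans ht₁ hu.1))).continuousWithinAt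
  have hScl : IsClosed S :=
    hcontOn.preimage_isClosed_of_isClosed isClosed_Icc isClosed_Iic
  have hSne : S.Nonempty := ⟨t₁, ⟨le_refl _, ht₁₂.le⟩, hρt₁⟩
  have hSbdd : BddAbove S := ⟨t₂, fun s hs => hs.1.2⟩
  set s₀ := sSup S with hs₀def
  have hs₀S : s₀ ∈ S := hScl.csSup_mem hSne hSbdd
  have hs₀1 : t₁ ≤ s₀ := hs₀S.1.1
  have hs₀le : ρ s₀ ≤ ρstar + ε := hs₀S.2
  have hs₀lt : s₀ < t₂ := lt_of_le_of_ne hs₀S.1.2 (fun h => by rw [h] at hs₀le; linarith)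
  have hgtmid : ∀ u ∈ Set.Ioo s₀ t₂, ρstar + ε < ρ u := by
    intro u hu
    by_contra hle
    push_neg at hle
    have huS : u ∈ S := ⟨⟨le_trans hs₀1 hu.1.le, hu.2.le⟩, hle⟩
    exact absurd (le_csSup hSbdd huS) (not_le.mpr hu.1)
  have hanti : AntitoneOn ρ (Set.Icc s₀ t₂) := by
    apply antitoneOn_of_deriv_nonpos (convex_Icc _ _)
    · intro u hu
      have hu0 : (0:ℝ) < u := lt_of_lt_of_le zero_lt_one (le_trans ht₁ (le_trans hs₀1 hu.1))
      exact (hcont u hu0).continuousWithinAt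
    · rw [interior_Icc]
      intro u hu
      have hu0 : (0:ℝ) < u := lt_of_lt_of_le zero_lt_one (le_trans ht₁ (le_trans hs₀1 hu.1.le))
      exact (hdiffat u hu0).differentiableWithinAt
    · rw [interior_Icc]
      intro u hu
      have hu0 : (0:ℝ) < u := lt_of_lt_of_le zero_lt_one (le_trans ht₁ (le_trans hs₀1 hu.1.le))
      have := hderivle u hu0 (hgtmid u hu).le
      linarith
  have := hanti (Set.left_mem_Icc.mpr hs₀lt.le) (Set.right_mem_Icc.mpr hs₀lt.le) hs₀lt.le
  linarith
end

section
/- Under the integro-differential system (ide), for every y ∈ [0,1], limsup_{t→∞} χ(t,y) ≤ ω^M(y) ρ⋆, where χ(t,y) = ∫₀¹ ω(x,y) n(t,x) dx, ω^M(y) := max_{x∈[0,1]} ω(x,y), and ρ⋆ = max_{x∈[0,1]} r(x)/d(x). -/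
open MeasureTheory Real Set Filter

lemma decay_aux {f g : ℝ → ℝ} {a b c : ℝ} (hab : a ≤ b)
    (hd : ∀ s ∈ Set.Icc a b, HasDerivAt f (g s) s)
    (hle : ∀ s ∈ Set.Icc a b, g s ≤ -c * f s) :
    f b ≤ f a * Real.exp (-c * (b - a)) := by
  set h : ℝ → ℝ := fun s => f s * Real.exp (c * s) with hh
  have hder : ∀ s ∈ Set.Icc a b, HasDerivAt h ((g s + c * f s) * Real.exp (c * s)) s := by
    intro s hs
    have h1 : HasDerivAt (fun u : ℝ => Real.exp (c * u)) (c * Real.exp (c * s)) s := by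
      simpa [mul_comm, Function.comp_def] using (Real.hasDerivAt_exp (c * s)).comp s ((hasDerivAt_id s).const_mul c)
    have : HasDerivAt h (g s * Real.exp (c * s) + f s * (c * Real.exp (c * s))) s :=
      (hd s hs).mul h1
    convert this using 1
    ring
  have hmono : AntitoneOn h (Set.Icc a b) := by
    apply antitoneOn_of_deriv_nonpos (convex_Icc a b)
    · exact fun s hs => ((hder s hs).continuousAt).continuousWithinAt
    · intro s hs
      rw [interior_Icc] at hs
      have hs' : s ∈ Set.Icc a b := Set.mem_Icc.2 ⟨hs.1.le, hs.2.le⟩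
      exact ((hder s hs').differentiableAt).differentiableWithinAt
    · intro s hs
      rw [interior_Icc] at hs
      have hs' : s ∈ Set.Icc a b := Set.mem_Icc.2 ⟨hs.1.le, hs.2.le⟩
      rw [(hder s hs').deriv]
      have := hle s hs'
      have h2 : g s + c * f s ≤ 0 := by linarith
      exact mul_nonpos_of_nonpos_of_nonneg h2 (Real.exp_nonneg _)
  have hba : h b ≤ h a := hmono (Set.left_mem_Icc.2 hab) (Set.right_mem_Icc.2 hab) hab
  have := mul_le_mul_of_nonneg_right hba (Real.exp_nonneg (-(c * b)))
  calc f b = f b * Real.exp (c * b) * Real.exp (-(c * b)) := by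
        rw [mul_assoc, ← Real.exp_add]; simp
    _ ≤ f a * Real.exp (c * a) * Real.exp (-(c * b)) := this
    _ = f a * Real.exp (-c * (b - a)) := by
        rw [mul_assoc, ← Real.exp_add]; ring_nf

/-- limsup χ(t,y) ≤ ω^M(y) ρ⋆ for every y. -/
theorem chi_limsup_bound
    (n l p : ℝ → ℝ → ℝ) (r d μ ψ ν : ℝ → ℝ) (ω : ℝ → ℝ → ℝ)
    (k₁ k₂ : ℝ) (ρ φ : ℝ → ℝ) (χ : ℝ → ℝ → ℝ) (ρstar : ℝ) (ωM : ℝ → ℝ)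
    (hk₁ : 0 < k₁) (hk₂ : 0 < k₂)
    (hrc : ContinuousOn r (Set.Icc 0 1)) (hdc : ContinuousOn d (Set.Icc 0 1))
    (hμc : ContinuousOn μ (Set.Icc 0 1)) (hψc : ContinuousOn ψ (Set.Icc 0 1))
    (hνc : ContinuousOn ν (Set.Icc 0 1))
    (hωc : ContinuousOn (fun q : ℝ × ℝ => ω q.1 q.2) (Set.Icc 0 1 ×ˢ Set.Icc 0 1))
    (hrpos : ∀ x ∈ Set.Icc (0:ℝ) 1, 0 < r x)
    (hdpos : ∀ x ∈ Set.Icc (0:ℝ) 1, 0 < d x)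
    (hμpos : ∀ x ∈ Set.Icc (0:ℝ) 1, 0 < μ x)
    (hψpos : ∀ y ∈ Set.Icc (0:ℝ) 1, 0 < ψ y)
    (hνpos : ∀ y ∈ Set.Icc (0:ℝ) 1, 0 < ν y)
    (hωpos : ∀ x ∈ Set.Icc (0:ℝ) 1, ∀ y ∈ Set.Icc (0:ℝ) 1, 0 < ω x y)
    (hρdef : ∀ t, ρ t = ∫ x in (0:ℝ)..1, n t x)
    (hφdef : ∀ t, φ t = ∫ y in (0:ℝ)..1, ψ y * l t y)
    (hχdef : ∀ t y, χ t y = ∫ x in (0:ℝ)..1, ω x y * n t x)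
    (hnode : ∀ x ∈ Set.Icc (0:ℝ) 1, ∀ t > (0:ℝ),
      HasDerivAt (fun s => n s x) ((r x - d x * ρ t - μ x * φ t) * n t x) t)
    (hlode : ∀ y ∈ Set.Icc (0:ℝ) 1, ∀ t > (0:ℝ),
      HasDerivAt (fun s => l s y) (p t y - (ν y * ρ t + k₁) * l t y) t)
    (hpode : ∀ y ∈ Set.Icc (0:ℝ) 1, ∀ t > (0:ℝ),
      HasDerivAt (fun s => p s y) (χ t y * p t y - k₂ * (p t y) ^ 2) t)
    (hnnn : ∀ t ≥ (0:ℝ), ∀ x ∈ Set.Icc (0:ℝ) 1, 0 ≤ n t x)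
    (hlnn : ∀ t ≥ (0:ℝ), ∀ y ∈ Set.Icc (0:ℝ) 1, 0 ≤ l t y)
    (hpnn : ∀ t ≥ (0:ℝ), ∀ y ∈ Set.Icc (0:ℝ) 1, 0 ≤ p t y)
    (hncont : ∀ t ≥ (0:ℝ), ContinuousOn (n t) (Set.Icc 0 1))
    (hlcont : ∀ t ≥ (0:ℝ), ContinuousOn (l t) (Set.Icc 0 1))
    (hpcont : ∀ t ≥ (0:ℝ), ContinuousOn (p t) (Set.Icc 0 1))
    (hρstar : IsGreatest ((fun x => r x / d x) '' Set.Icc (0:ℝ) 1) ρstar)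
    (hωM : ∀ y ∈ Set.Icc (0:ℝ) 1, IsGreatest ((fun x => ω x y) '' Set.Icc (0:ℝ) 1) (ωM y))
    :
    ∀ y ∈ Set.Icc (0:ℝ) 1, ∀ ε > 0, ∀ᶠ t in Filter.atTop, χ t y ≤ ωM y * ρstar + ε := by
  -- preliminaries
  have hIcc : Set.uIcc (0:ℝ) 1 = Set.Icc 0 1 := Set.uIcc_of_le zero_le_one
  obtain ⟨xr, hxr, hxrmax⟩ := isCompact_Icc.exists_isMaxOn ⟨0, by norm_num⟩ hrc
  set rM := r xr with hrMdef
  have hrM : ∀ x ∈ Set.Icc (0:ℝ) 1, r x ≤ rM := fun x hx => hxrmax hx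
  have hrMpos : 0 < rM := hrpos xr hxr
  obtain ⟨xd, hxd, hxdmin⟩ := isCompact_Icc.exists_isMinOn ⟨0, by norm_num⟩ hdc
  set dm := d xd with hdmdef
  have hdm : ∀ x ∈ Set.Icc (0:ℝ) 1, dm ≤ d x := fun x hx => hxdmin hx
  have hdmpos : 0 < dm := hdpos xd hxd
  obtain ⟨x0, hx0, hx0eq⟩ := hρstar.1
  have hρspos : 0 < ρstar := by
    rw [← hx0eq]; exact div_pos (hrpos x0 hx0) (hdpos x0 hx0)
  have hrd : ∀ x ∈ Set.Icc (0:ℝ) 1, r x ≤ d x * ρstar := by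
    intro x hx
    have := hρstar.2 ⟨x, hx, rfl⟩
    have h2 := (div_le_iff₀ (hdpos x hx)).1 this
    linarith [h2, mul_comm ρstar (d x)]
  have hρnn : ∀ t : ℝ, 0 ≤ t → 0 ≤ ρ t := by
    intro t ht
    rw [hρdef t]
    exact intervalIntegral.integral_nonneg zero_le_one (fun x hx => hnnn t ht x hx)
  have hφnn : ∀ t : ℝ, 0 ≤ t → 0 ≤ φ t := by
    intro t ht
    rw [hφdef t]
    exact intervalIntegral.integral_nonneg zero_le_one
      (fun u hu => mul_nonneg (hψpos u hu).le (hlnn t ht u hu))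
  have hInt : ∀ t : ℝ, 0 ≤ t → IntervalIntegrable (n t) MeasureTheory.volume 0 1 := by
    intro t ht
    exact ((hncont t ht).mono (by rw [hIcc])).intervalIntegrable
  -- pointwise growth
  have hgrow : ∀ x ∈ Set.Icc (0:ℝ) 1, ∀ t0 t1 : ℝ, 0 < t0 → t0 ≤ t1 →
      n t1 x ≤ n t0 x * Real.exp (rM * (t1 - t0)) := by
    intro x hx t0 t1 ht0 h01
    have := decay_aux (f := fun s => n s x)
      (g := fun s => (r x - d x * ρ s - μ x * φ s) * n s x) (a := t0) (b := t1) (c := -rM) h01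
      (fun s hs => hnode x hx s (lt_of_lt_of_le ht0 hs.1))
      (fun s hs => by
        have hs0 : (0:ℝ) ≤ s := le_trans ht0.le hs.1
        have hnn := hnnn s hs0 x hx
        have h1 : r x - d x * ρ s - μ x * φ s ≤ rM := by
          have := mul_nonneg (le_trans hdmpos.le (hdm x hx)) (hρnn s hs0)
          have := mul_nonneg (hμpos x hx).le (hφnn s hs0)
          have := hrM x hx
          linarith
        have := mul_le_mul_of_nonneg_right h1 hnn
        simpa [neg_neg] using this)
    simpa [neg_neg] using this
  -- pointwise decay when ρ is large
  have hdecay : ∀ x ∈ Set.Icc (0:ℝ) 1, ∀ ε' : ℝ, 0 < ε' → ∀ t0 t1 : ℝ, 0 < t0 → t0 ≤ t1 →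
      (∀ s ∈ Set.Icc t0 t1, ρstar + ε' ≤ ρ s) →
      n t1 x ≤ n t0 x * Real.exp (-(dm * ε') * (t1 - t0)) := by
    intro x hx ε' hε' t0 t1 ht0 h01 hbig
    exact decay_aux (f := fun s => n s x)
      (g := fun s => (r x - d x * ρ s - μ x * φ s) * n s x) (a := t0) (b := t1) (c := dm * ε') h01
      (fun s hs => hnode x hx s (lt_of_lt_of_le ht0 hs.1))
      (fun s hs => by
        have hs0 : (0:ℝ) ≤ s := le_trans ht0.le hs.1
        have hnn := hnnn s hs0 x hx
        have hd' := hdm x hx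
        have h1 : r x - d x * ρ s - μ x * φ s ≤ -(dm * ε') := by
          have h2 := hrd x hx
          have h3 := hbig s hs
          have h4 : d x * (ρstar + ε') ≤ d x * ρ s :=
            mul_le_mul_of_nonneg_left h3 (le_trans hdmpos.le hd')
          have h5 := mul_nonneg (hμpos x hx).le (hφnn s hs0)
          nlinarith
        have := mul_le_mul_of_nonneg_right h1 hnn
        simpa using this)
  -- integrated decay
  have hρdecay : ∀ ε' : ℝ, 0 < ε' → ∀ t0 t1 : ℝ, 0 < t0 → t0 ≤ t1 →
      (∀ s ∈ Set.Icc t0 t1, ρstar + ε' ≤ ρ s) →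
      ρ t1 ≤ ρ t0 * Real.exp (-(dm * ε') * (t1 - t0)) := by
    intro ε' hε' t0 t1 ht0 h01 hbig
    rw [hρdef t1, hρdef t0, ← intervalIntegral.integral_mul_const]
    apply intervalIntegral.integral_mono_on zero_le_one (hInt t1 (le_trans ht0.le h01))
      ((hInt t0 ht0.le).mul_const _)
    intro x hx
    exact hdecay x hx ε' hε' t0 t1 ht0 h01 hbig
  -- continuity of ρ on (0, ∞)
  have hρcont : ∀ t : ℝ, 0 < t → ContinuousAt ρ t := by
    intro t ht
    have hρeq : ρ = fun s => ∫ x in Set.Ioc (0:ℝ) 1, n s x := by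
      funext s
      rw [hρdef s, intervalIntegral.integral_of_le zero_le_one]
    rw [hρeq]
    have ht0 : 0 < t / 2 := by linarith
    have htt0 : t / 2 < t := by linarith
    have htT : t < t + 1 := by linarith
    apply MeasureTheory.continuousAt_of_dominated
      (bound := fun x => n (t/2) x * Real.exp (rM * (t + 1 - t/2)))
    · filter_upwards [Ioo_mem_nhds htt0 htT] with s hs
      exact ((hncont s (le_of_lt (lt_trans ht0 hs.1))).mono Set.Ioc_subset_Icc_self
        ).aestronglyMeasurable measurableSet_Ioc
    · filter_upwards [Ioo_mem_nhds htt0 htT] with s hs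
      rw [MeasureTheory.ae_restrict_iff' measurableSet_Ioc]
      apply MeasureTheory.ae_of_all
      intro x hx
      have hx' : x ∈ Set.Icc (0:ℝ) 1 := Set.Ioc_subset_Icc_self hx
      have hs0 : (0:ℝ) ≤ s := le_of_lt (lt_trans ht0 hs.1)
      have h1 : n s x ≤ n (t/2) x * Real.exp (rM * (s - t/2)) := hgrow x hx' (t/2) s ht0 hs.1.le
      have h2 : Real.exp (rM * (s - t/2)) ≤ Real.exp (rM * (t + 1 - t/2)) := by
        apply Real.exp_le_exp.2
        have : s ≤ t + 1 := hs.2.le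
        nlinarith
      have h3 : 0 ≤ n (t/2) x := hnnn (t/2) ht0.le x hx'
      rw [Real.norm_eq_abs, abs_of_nonneg (hnnn s hs0 x hx')]
      calc n s x ≤ n (t/2) x * Real.exp (rM * (s - t/2)) := h1
        _ ≤ n (t/2) x * Real.exp (rM * (t + 1 - t/2)) := mul_le_mul_of_nonneg_left h2 h3
    · exact (((hncont (t/2) ht0.le).mul continuousOn_const).integrableOn_Icc).mono_set
        Set.Ioc_subset_Icc_self
    · rw [MeasureTheory.ae_restrict_iff' measurableSet_Ioc]
      apply MeasureTheory.ae_of_all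
      intro x hx
      exact (hnode x (Set.Ioc_subset_Icc_self hx) t ht).continuousAt
  -- main eventual bound on ρ
  have hmain : ∀ ε' : ℝ, 0 < ε' → ∃ T : ℝ, ∀ t ≥ T, ρ t ≤ ρstar + ε' := by
    intro ε' hε'
    set c := dm * ε' with hc
    have hcpos : 0 < c := mul_pos hdmpos hε'
    have hps : 0 < ρstar + ε' := by linarith
    refine ⟨max 2 (1 + ρ 1 / (c * (ρstar + ε'))), fun t htT => ?_⟩
    have ht2 : (2:ℝ) ≤ t := le_trans (le_max_left _ _) htT
    have ht1 : (1:ℝ) < t := by linarith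
    by_contra hcon
    push_neg at hcon
    set S := Set.Icc 1 t ∩ ρ ⁻¹' Set.Iic (ρstar + ε') with hS
    have hρcontIcc : ContinuousOn ρ (Set.Icc 1 t) := fun s hs =>
      (hρcont s (lt_of_lt_of_le one_pos hs.1)).continuousWithinAt
    have hSclosed : IsClosed S :=
      hρcontIcc.preimage_isClosed_of_isClosed isClosed_Icc isClosed_Iic
    by_cases hne : S.Nonempty
    · set t0 := sSup S with ht0def
      have hbdd : BddAbove S := ⟨t, fun u hu => hu.1.2⟩
      have ht0S : t0 ∈ S := hSclosed.csSup_mem hne hbdd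
      have ht0t : t0 ≤ t := ht0S.1.2
      have h1t0 : (1:ℝ) ≤ t0 := ht0S.1.1
      have hρt0 : ρ t0 ≤ ρstar + ε' := ht0S.2
      have ht0lt : t0 < t := by
        rcases lt_or_eq_of_le ht0t with h | h
        · exact h
        · exfalso; rw [h] at hρt0; linarith
      have hbig : ∀ s, t0 < s → s ≤ t → ρstar + ε' ≤ ρ s := by
        intro s hs1 hs2
        by_contra hle
        push_neg at hle
        have hsS : s ∈ S := ⟨⟨le_trans h1t0 hs1.le, hs2⟩, hle.le⟩
        exact absurd (le_csSup hbdd hsS) (not_le.2 hs1)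
      have hkey : ∀ u ∈ Set.Ioo t0 t, ρ t ≤ ρ u := by
        intro u hu
        have hu0 : 0 < u := lt_of_lt_of_le (lt_of_lt_of_le one_pos h1t0) hu.1.le
        have hdec := hρdecay ε' hε' u t hu0 hu.2.le
          (fun s hs => hbig s (lt_of_lt_of_le hu.1 hs.1) hs.2)
        have hexp : Real.exp (-c * (t - u)) ≤ 1 := by
          apply Real.exp_le_one_iff.2
          nlinarith [hu.2]
        have hρu : 0 ≤ ρ u := hρnn u hu0.le
        calc ρ t ≤ ρ u * Real.exp (-c * (t - u)) := hdec
          _ ≤ ρ u * 1 := mul_le_mul_of_nonneg_left hexp hρu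
          _ = ρ u := mul_one _
      have htend : Filter.Tendsto ρ (nhdsWithin t0 (Set.Ioi t0)) (nhds (ρ t0)) :=
        ((hρcont t0 (lt_of_lt_of_le one_pos h1t0)).tendsto).mono_left nhdsWithin_le_nhds
      have hfin : ρ t ≤ ρ t0 := by
        apply ge_of_tendsto htend
        filter_upwards [Ioo_mem_nhdsGT_of_mem ⟨le_refl t0, ht0lt⟩] with u hu
        exact hkey u hu
      linarith
    · rw [Set.not_nonempty_iff_eq_empty] at hne
      have hbig : ∀ s ∈ Set.Icc 1 t, ρstar + ε' ≤ ρ s := by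
        intro s hs
        by_contra h
        push_neg at h
        have : s ∈ S := ⟨hs, h.le⟩
        rw [hne] at this
        exact this
      have hd := hρdecay ε' hε' 1 t one_pos ht1.le hbig
      have hz : 0 < c * (t - 1) := mul_pos hcpos (by linarith)
      have hexp : Real.exp (-c * (t - 1)) ≤ 1 / (c * (t - 1)) := by
        rw [neg_mul, Real.exp_neg, one_div]
        apply inv_anti₀ hz
        have := Real.add_one_le_exp (c * (t - 1))
        linarith
      have hρ1 : 0 ≤ ρ 1 := hρnn 1 one_pos.le
      have h2 : ρ t ≤ ρ 1 * (1 / (c * (t - 1))) :=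
        le_trans hd (mul_le_mul_of_nonneg_left hexp hρ1)
      have hT2 : 1 + ρ 1 / (c * (ρstar + ε')) ≤ t := le_trans (le_max_right _ _) htT
      have h3 : ρ 1 ≤ (ρstar + ε') * (c * (t - 1)) := by
        have h4 : ρ 1 / (c * (ρstar + ε')) ≤ t - 1 := by linarith
        have h5 : 0 < c * (ρstar + ε') := mul_pos hcpos hps
        rw [div_le_iff₀ h5] at h4
        nlinarith
      have h6 : ρ 1 * (1 / (c * (t - 1))) ≤ ρstar + ε' := by
        rw [mul_one_div, div_le_iff₀ hz]
        linarith
      linarith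
  -- conclusion
  intro y hy ε hε
  obtain ⟨xω, hxω, hxωeq⟩ := (hωM y hy).1
  have hωMpos : 0 < ωM y := by rw [← hxωeq]; exact hωpos xω hxω y hy
  obtain ⟨T, hT⟩ := hmain (ε / ωM y) (div_pos hε hωMpos)
  filter_upwards [Filter.eventually_ge_atTop (max T 0)] with t ht
  have htT : T ≤ t := le_trans (le_max_left _ _) ht
  have ht0 : (0:ℝ) ≤ t := le_trans (le_max_right _ _) ht
  have hρt := hT t htT
  have hωy : ContinuousOn (fun x => ω x y) (Set.Icc 0 1) := by
    have h := ContinuousOn.comp hωc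
      (Continuous.continuousOn (continuous_id.prodMk continuous_const) :
        ContinuousOn (fun x : ℝ => (x, y)) (Set.Icc 0 1))
      (fun x hx => Set.mk_mem_prod hx hy)
    exact h
  have hχle : χ t y ≤ ωM y * ρ t := by
    rw [hχdef t y, hρdef t, ← intervalIntegral.integral_const_mul]
    apply intervalIntegral.integral_mono_on zero_le_one
      ((hωy.mul (hncont t ht0)).mono (by rw [hIcc]) |>.intervalIntegrable)
      (((hncont t ht0).const_smul (ωM y)).mono (by rw [hIcc]) |>.intervalIntegrable)
    intro x hx
    exact mul_le_mul_of_nonneg_right ((hωM y hy).2 ⟨x, hx, rfl⟩) (hnnn t ht0 x hx)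
  have : ωM y * ρ t ≤ ωM y * (ρstar + ε / ωM y) := mul_le_mul_of_nonneg_left hρt hωMpos.le
  have heq : ωM y * (ρstar + ε / ωM y) = ωM y * ρstar + ε := by
    field_simp
  linarith
end

section
/- Under the integro-differential system (ide), for every y ∈ [0,1], limsup_{t→∞} p(t,y) ≤ p̄(y) := ω^M(y) ρ⋆ / k₂, where ω^M(y) = max_{x∈[0,1]} ω(x,y) and ρ⋆ = max_{x∈[0,1]} r(x)/d(x). -/
open Set Filter Real

lemma expDecayAux {f f' : ℝ → ℝ} {c s t : ℝ} (hst : s ≤ t)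
    (hf : ∀ u ∈ Set.Icc s t, HasDerivAt f (f' u) u)
    (hle : ∀ u ∈ Set.Icc s t, f' u ≤ -c * f u) :
    f t ≤ Real.exp (-c * (t - s)) * f s := by
  set F : ℝ → ℝ := fun u => Real.exp (c * u) * f u with hFdef
  have hFd : ∀ u ∈ Set.Icc s t,
      HasDerivAt F (Real.exp (c * u) * (c * f u + f' u)) u := by
    intro u hu
    have h1 : HasDerivAt (fun v : ℝ => Real.exp (c * v)) (Real.exp (c * u) * c) u := by
      simpa [mul_comm, Function.comp_def] using (Real.hasDerivAt_exp (c * u)).comp u ((hasDerivAt_id u).const_mul c)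
    have h2 : HasDerivAt (fun v => Real.exp (c * v) * f v) _ u := h1.mul (hf u hu)
    convert h2 using 1
    ring
  have hcont : ContinuousOn F (Set.Icc s t) := fun u hu =>
    (hFd u hu).continuousAt.continuousWithinAt
  have hdiff : DifferentiableOn ℝ F (interior (Set.Icc s t)) := by
    intro u hu
    rw [interior_Icc] at hu
    exact ((hFd u (Set.Ioo_subset_Icc_self hu)).differentiableAt).differentiableWithinAt
  have hderiv : ∀ u ∈ interior (Set.Icc s t), deriv F u ≤ 0 := by
    intro u hu
    rw [interior_Icc] at hu
    rw [(hFd u (Set.Ioo_subset_Icc_self hu)).deriv]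
    have h2 : c * f u + f' u ≤ 0 := by
      have := hle u (Set.Ioo_subset_Icc_self hu); linarith
    exact mul_nonpos_of_nonneg_of_nonpos (Real.exp_nonneg _) h2
  have hmono : AntitoneOn F (Set.Icc s t) :=
    antitoneOn_of_deriv_nonpos (convex_Icc s t) hcont hdiff hderiv
  have hFle : Real.exp (c * t) * f t ≤ Real.exp (c * s) * f s :=
    hmono (Set.left_mem_Icc.2 hst) (Set.right_mem_Icc.2 hst) hst
  have hpos : (0:ℝ) < Real.exp (c * t) := Real.exp_pos _
  calc f t = Real.exp (-(c*t)) * (Real.exp (c*t) * f t) := by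
        rw [← mul_assoc, ← Real.exp_add]; simp
    _ ≤ Real.exp (-(c*t)) * (Real.exp (c*s) * f s) :=
        mul_le_mul_of_nonneg_left hFle (Real.exp_nonneg _)
    _ = Real.exp (-c * (t - s)) * f s := by
        rw [← mul_assoc, ← Real.exp_add]; ring_nf

lemma linDecayAux {f f' : ℝ → ℝ} {c s t : ℝ} (hst : s ≤ t)
    (hf : ∀ u ∈ Set.Icc s t, HasDerivAt f (f' u) u)
    (hle : ∀ u ∈ Set.Icc s t, f' u ≤ -c) :
    f t ≤ f s - c * (t - s) := by
  set F : ℝ → ℝ := fun u => f u + c * u with hFdef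
  have hFd : ∀ u ∈ Set.Icc s t, HasDerivAt F (f' u + c) u := by
    intro u hu
    have h := (hf u hu).add ((hasDerivAt_id u).const_mul c)
    simpa [hFdef, Pi.add_def] using h
  have hmono : AntitoneOn F (Set.Icc s t) := by
    apply antitoneOn_of_deriv_nonpos (convex_Icc s t)
    · exact fun u hu => (hFd u hu).continuousAt.continuousWithinAt
    · intro u hu
      rw [interior_Icc] at hu
      exact ((hFd u (Set.Ioo_subset_Icc_self hu)).differentiableAt).differentiableWithinAt
    · intro u hu
      rw [interior_Icc] at hu
      rw [(hFd u (Set.Ioo_subset_Icc_self hu)).deriv]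
      have := hle u (Set.Ioo_subset_Icc_self hu); linarith
  have := hmono (Set.left_mem_Icc.2 hst) (Set.right_mem_Icc.2 hst) hst
  simp only [hFdef] at this
  linarith



set_option maxHeartbeats 4000000 in
/-- limsup p(t,y) ≤ p̄(y) = ω^M(y) ρ⋆ / k₂ for every y. -/
theorem naive_cells_limsup_bound
    (n l p : ℝ → ℝ → ℝ) (r d μ ψ ν : ℝ → ℝ) (ω : ℝ → ℝ → ℝ)
    (k₁ k₂ : ℝ) (ρ φ : ℝ → ℝ) (χ : ℝ → ℝ → ℝ) (ρstar : ℝ) (ωM : ℝ → ℝ)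
    (hk₁ : 0 < k₁) (hk₂ : 0 < k₂)
    (hrc : ContinuousOn r (Set.Icc 0 1)) (hdc : ContinuousOn d (Set.Icc 0 1))
    (hμc : ContinuousOn μ (Set.Icc 0 1)) (hψc : ContinuousOn ψ (Set.Icc 0 1))
    (hνc : ContinuousOn ν (Set.Icc 0 1))
    (hωc : ContinuousOn (fun q : ℝ × ℝ => ω q.1 q.2) (Set.Icc 0 1 ×ˢ Set.Icc 0 1))
    (hrpos : ∀ x ∈ Set.Icc (0:ℝ) 1, 0 < r x)
    (hdpos : ∀ x ∈ Set.Icc (0:ℝ) 1, 0 < d x)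
    (hμpos : ∀ x ∈ Set.Icc (0:ℝ) 1, 0 < μ x)
    (hψpos : ∀ y ∈ Set.Icc (0:ℝ) 1, 0 < ψ y)
    (hνpos : ∀ y ∈ Set.Icc (0:ℝ) 1, 0 < ν y)
    (hωpos : ∀ x ∈ Set.Icc (0:ℝ) 1, ∀ y ∈ Set.Icc (0:ℝ) 1, 0 < ω x y)
    (hρdef : ∀ t, ρ t = ∫ x in (0:ℝ)..1, n t x)
    (hφdef : ∀ t, φ t = ∫ y in (0:ℝ)..1, ψ y * l t y)
    (hχdef : ∀ t y, χ t y = ∫ x in (0:ℝ)..1, ω x y * n t x)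
    (hnode : ∀ x ∈ Set.Icc (0:ℝ) 1, ∀ t > (0:ℝ),
      HasDerivAt (fun s => n s x) ((r x - d x * ρ t - μ x * φ t) * n t x) t)
    (hlode : ∀ y ∈ Set.Icc (0:ℝ) 1, ∀ t > (0:ℝ),
      HasDerivAt (fun s => l s y) (p t y - (ν y * ρ t + k₁) * l t y) t)
    (hpode : ∀ y ∈ Set.Icc (0:ℝ) 1, ∀ t > (0:ℝ),
      HasDerivAt (fun s => p s y) (χ t y * p t y - k₂ * (p t y) ^ 2) t)
    (hnnn : ∀ t ≥ (0:ℝ), ∀ x ∈ Set.Icc (0:ℝ) 1, 0 ≤ n t x)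
    (hlnn : ∀ t ≥ (0:ℝ), ∀ y ∈ Set.Icc (0:ℝ) 1, 0 ≤ l t y)
    (hpnn : ∀ t ≥ (0:ℝ), ∀ y ∈ Set.Icc (0:ℝ) 1, 0 ≤ p t y)
    (hncont : ∀ t ≥ (0:ℝ), ContinuousOn (n t) (Set.Icc 0 1))
    (hlcont : ∀ t ≥ (0:ℝ), ContinuousOn (l t) (Set.Icc 0 1))
    (hpcont : ∀ t ≥ (0:ℝ), ContinuousOn (p t) (Set.Icc 0 1))
    (hρstar : IsGreatest ((fun x => r x / d x) '' Set.Icc (0:ℝ) 1) ρstar)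
    (hωM : ∀ y ∈ Set.Icc (0:ℝ) 1, IsGreatest ((fun x => ω x y) '' Set.Icc (0:ℝ) 1) (ωM y))
    :
    ∀ y ∈ Set.Icc (0:ℝ) 1, ∀ ε > 0, ∀ᶠ t in Filter.atTop, p t y ≤ ωM y * ρstar / k₂ + ε := by
  have h01 : (0:ℝ) ≤ 1 := by norm_num
  have huIcc : Set.uIcc (0:ℝ) 1 = Set.Icc 0 1 := Set.uIcc_of_le h01
  -- nonnegativity of ρ and φ
  have hρ0 : ∀ t ≥ (0:ℝ), 0 ≤ ρ t := by
    intro t ht; rw [hρdef]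
    exact intervalIntegral.integral_nonneg h01 (fun x hx => hnnn t ht x hx)
  have hφ0 : ∀ t ≥ (0:ℝ), 0 ≤ φ t := by
    intro t ht; rw [hφdef]
    exact intervalIntegral.integral_nonneg h01 (fun x hx =>
      mul_nonneg (hψpos x hx).le (hlnn t ht x hx))
  -- max of r
  obtain ⟨xM, hxM, hxMmax⟩ := isCompact_Icc.exists_isMaxOn ⟨0, Set.left_mem_Icc.2 h01⟩ hrc
  set rM := r xM with hrMdef
  have hrM : ∀ x ∈ Set.Icc (0:ℝ) 1, r x ≤ rM := fun x hx => hxMmax hx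
  have hrMpos : 0 < rM := hrpos xM hxM
  -- min of d
  obtain ⟨xm, hxm, hxmmin⟩ := isCompact_Icc.exists_isMinOn ⟨0, Set.left_mem_Icc.2 h01⟩ hdc
  set dm := d xm with hdmdef
  have hdm : ∀ x ∈ Set.Icc (0:ℝ) 1, dm ≤ d x := fun x hx => hxmmin hx
  have hdmpos : 0 < dm := hdpos xm hxm
  -- ρstar
  obtain ⟨x₀, hx₀, hx₀eq⟩ := hρstar.1
  have hρsp : 0 < ρstar := hx₀eq ▸ div_pos (hrpos _ hx₀) (hdpos _ hx₀)
  have hrd : ∀ x ∈ Set.Icc (0:ℝ) 1, r x ≤ d x * ρstar := by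
    intro x hx
    have h := hρstar.2 ⟨x, hx, rfl⟩
    rw [div_le_iff₀ (hdpos x hx)] at h
    linarith
  -- key per-x decay lemma
  have hkey : ∀ x ∈ Set.Icc (0:ℝ) 1, ∀ c s t : ℝ, 0 < s → s ≤ t →
      (∀ u ∈ Set.Icc s t, r x - d x * ρ u - μ x * φ u ≤ -c) →
      n t x ≤ Real.exp (-c * (t - s)) * n s x := by
    intro x hx c s t hs hst hcond
    apply expDecayAux (f' := fun u => (r x - d x * ρ u - μ x * φ u) * n u x) hst
    · intro u hu; exact hnode x hx u (lt_of_lt_of_le hs hu.1)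
    · intro u hu
      have hn : 0 ≤ n u x := hnnn u (le_of_lt (lt_of_lt_of_le hs hu.1)) x hx
      have h := hcond u hu
      nlinarith
  -- integrability
  have hint : ∀ t ≥ (0:ℝ), IntervalIntegrable (n t) MeasureTheory.volume 0 1 := by
    intro t ht
    exact ContinuousOn.intervalIntegrable (by rw [huIcc]; exact hncont t ht)
  -- growth bound on ρ
  have hρgrow : ∀ s t : ℝ, 0 < s → s ≤ t → ρ t ≤ Real.exp (rM * (t - s)) * ρ s := by
    intro s t hs hst
    rw [hρdef, hρdef]
    have hcalc : ∫ x in (0:ℝ)..1, n t x ≤ ∫ x in (0:ℝ)..1, Real.exp (rM*(t-s)) * n s x := by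
      apply intervalIntegral.integral_mono_on h01 (hint t (le_trans hs.le hst))
        ((hint s hs.le).const_mul _)
      intro x hx
      have hc : ∀ u ∈ Set.Icc s t, r x - d x * ρ u - μ x * φ u ≤ -(-rM) := by
        intro u hu
        have h1 : 0 ≤ d x * ρ u := mul_nonneg (hdpos x hx).le (hρ0 u (le_of_lt (lt_of_lt_of_le hs hu.1)))
        have h2 : 0 ≤ μ x * φ u := mul_nonneg (hμpos x hx).le (hφ0 u (le_of_lt (lt_of_lt_of_le hs hu.1)))
        have h3 := hrM x hx
        linarith
      have := hkey x hx (-rM) s t hs hst hc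
      simpa using this
    rw [intervalIntegral.integral_const_mul] at hcalc
    exact hcalc
  -- conditional decay of ρ
  have hρdecay : ∀ ε : ℝ, 0 ≤ ε → ∀ s t : ℝ, 0 < s → s ≤ t →
      (∀ u ∈ Set.Icc s t, ρstar + ε ≤ ρ u) →
      ρ t ≤ Real.exp (-(ε*dm) * (t - s)) * ρ s := by
    intro ε hε s t hs hst hcond
    rw [hρdef, hρdef]
    have hcalc : ∫ x in (0:ℝ)..1, n t x
        ≤ ∫ x in (0:ℝ)..1, Real.exp (-(ε*dm)*(t-s)) * n s x := by
      apply intervalIntegral.integral_mono_on h01 (hint t (le_trans hs.le hst))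
        ((hint s hs.le).const_mul _)
      intro x hx
      have hc : ∀ u ∈ Set.Icc s t, r x - d x * ρ u - μ x * φ u ≤ -(ε*dm) := by
        intro u hu
        have h1 : d x * (ρstar + ε) ≤ d x * ρ u :=
          mul_le_mul_of_nonneg_left (hcond u hu) (hdpos x hx).le
        have h2 : ε * dm ≤ ε * d x := mul_le_mul_of_nonneg_left (hdm x hx) hε
        have h3 : 0 ≤ μ x * φ u := mul_nonneg (hμpos x hx).le (hφ0 u (le_of_lt (lt_of_lt_of_le hs hu.1)))
        have h4 := hrd x hx
        nlinarith
      exact hkey x hx (ε*dm) s t hs hst hc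
    rw [intervalIntegral.integral_const_mul] at hcalc
    exact hcalc
  -- eventual bound on ρ
  have hρev : ∀ ε > (0:ℝ), ∃ T ≥ (1:ℝ), ∀ t ≥ T, ρ t ≤ ρstar + ε := by
    intro ε hε
    set L := ρstar + ε with hLdef
    have hLpos : 0 < L := by positivity
    have hex : ∃ t₁ ≥ (1:ℝ), ρ t₁ < L := by
      by_contra hno; push_neg at hno
      have hdec : ∀ t ≥ (1:ℝ), ρ t ≤ Real.exp (-(ε*dm)*(t-1)) * ρ 1 := fun t ht =>
        hρdecay ε hε.le 1 t one_pos ht (fun u hu => hno u hu.1)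
      have htend : Filter.Tendsto (fun t : ℝ => Real.exp (-(ε*dm)*(t-1)) * ρ 1)
          Filter.atTop (nhds 0) := by
        have h1 : Filter.Tendsto (fun t : ℝ => -(ε*dm)*(t-1)) Filter.atTop Filter.atBot := by
          have hneg : -(ε*dm) < 0 := by nlinarith
          exact Filter.Tendsto.const_mul_atTop_of_neg hneg
            (Filter.tendsto_atTop_add_const_right _ _ Filter.tendsto_id)
        simpa using (Real.tendsto_exp_atBot.comp h1).mul_const (ρ 1)
      have hev := (htend.eventually_lt_const hLpos).and (Filter.eventually_ge_atTop (1:ℝ))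
      obtain ⟨t, ht1, ht2⟩ := hev.exists
      exact absurd (hno t ht2) (not_le.2 (lt_of_le_of_lt (hdec t ht2) ht1))
    obtain ⟨t₁, ht₁1, ht₁⟩ := hex
    refine ⟨t₁, ht₁1, ?_⟩
    intro t ht
    by_contra hgt; push_neg at hgt
    set S := {u : ℝ | u ∈ Set.Icc t₁ t ∧ ρ u < L} with hSdef
    have hSne : t₁ ∈ S := ⟨⟨le_refl _, ht⟩, ht₁⟩
    have hSbdd : BddAbove S := ⟨t, fun u hu => hu.1.2⟩
    set s := sSup S with hs
    have hst₁ : t₁ ≤ s := le_csSup hSbdd hSne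
    have hst : s ≤ t := csSup_le ⟨t₁, hSne⟩ (fun u hu => hu.1.2)
    have hspos : (0:ℝ) < s := lt_of_lt_of_le one_pos (le_trans ht₁1 hst₁)
    have hhigh : ∀ u, s < u → u ≤ t → L ≤ ρ u := by
      intro u hsu hut
      by_contra hlt; push_neg at hlt
      have huS : u ∈ S := ⟨⟨le_trans hst₁ hsu.le, hut⟩, hlt⟩
      exact absurd (le_csSup hSbdd huS) (not_le.2 hsu)
    have hδbound : ∀ δ > (0:ℝ), ρ t ≤ Real.exp (rM * (2*δ)) * L := by
      intro δ hδ
      obtain ⟨u, huS, hu⟩ := exists_lt_of_lt_csSup ⟨t₁, hSne⟩ (show s - δ < s by linarith)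
      have hu0 : (0:ℝ) < u := lt_of_lt_of_le one_pos (le_trans ht₁1 huS.1.1)
      have hus : u ≤ s := le_csSup hSbdd huS
      rcases eq_or_lt_of_le hst with heq | hlt
      · have hut : u ≤ t := huS.1.2
        have h1 : ρ t ≤ Real.exp (rM*(t-u)) * ρ u := hρgrow u t hu0 hut
        have h2 : Real.exp (rM*(t-u)) ≤ Real.exp (rM*(2*δ)) := by
          apply Real.exp_le_exp.2
          have h3 : t - u ≤ 2*δ := by rw [← heq]; linarith
          nlinarith
        calc ρ t ≤ Real.exp (rM*(t-u)) * ρ u := h1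
          _ ≤ Real.exp (rM*(2*δ)) * L := mul_le_mul h2 huS.2.le (hρ0 u hu0.le) (Real.exp_nonneg _)
      · set v := min (s+δ) t with hv
        have hsv : s < v := lt_min (by linarith) hlt
        have hvt : v ≤ t := min_le_right _ _
        have hv0 : (0:ℝ) < v := lt_trans hspos hsv
        have hρL : ∀ w ∈ Set.Icc v t, ρstar + 0 ≤ ρ w := by
          intro w hw
          have := hhigh w (lt_of_lt_of_le hsv hw.1) hw.2
          rw [add_zero]; linarith
        have h1 : ρ t ≤ ρ v := by
          have h := hρdecay 0 le_rfl v t hv0 hvt hρL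
          simpa using h
        have h2 : ρ v ≤ Real.exp (rM*(v-u)) * ρ u := hρgrow u v hu0 (le_of_lt (lt_of_le_of_lt hus hsv))
        have huv : v - u ≤ 2*δ := by
          have h3 : v ≤ s + δ := min_le_left _ _
          linarith
        have h4 : Real.exp (rM*(v-u)) ≤ Real.exp (rM*(2*δ)) := by
          apply Real.exp_le_exp.2; nlinarith
        calc ρ t ≤ ρ v := h1
          _ ≤ Real.exp (rM*(v-u)) * ρ u := h2
          _ ≤ Real.exp (rM*(2*δ)) * L := mul_le_mul h4 huS.2.le (hρ0 u hu0.le) (Real.exp_nonneg _)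
    have hfin : ρ t ≤ L := by
      have htend : Filter.Tendsto (fun δ : ℝ => Real.exp (rM*(2*δ)) * L)
          (nhdsWithin 0 (Set.Ioi 0)) (nhds L) := by
        have hc : ContinuousAt (fun δ : ℝ => Real.exp (rM*(2*δ)) * L) 0 := by fun_prop
        have h : Filter.Tendsto (fun δ : ℝ => Real.exp (rM*(2*δ)) * L)
            (nhdsWithin 0 (Set.Ioi 0)) (nhds (Real.exp (rM*(2*0)) * L)) :=
          hc.tendsto.mono_left nhdsWithin_le_nhds
        simpa using h
      exact ge_of_tendsto htend (eventually_nhdsWithin_of_forall (fun δ hδ => hδbound δ hδ))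
    linarith
  intro y hy ε hε
  -- χ bound
  have hχle : ∀ t ≥ (0:ℝ), χ t y ≤ ωM y * ρ t := by
    intro t ht
    rw [hχdef, hρdef]
    have hωy : ContinuousOn (fun x => ω x y) (Set.Icc 0 1) := by
      have hm : ContinuousOn (fun x : ℝ => ((x, y) : ℝ × ℝ)) (Set.Icc 0 1) :=
        (continuous_id.prodMk continuous_const).continuousOn
      exact hωc.comp hm (fun x hx => ⟨hx, hy⟩)
    have hcalc : ∫ x in (0:ℝ)..1, ω x y * n t x ≤ ∫ x in (0:ℝ)..1, ωM y * n t x := by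
      apply intervalIntegral.integral_mono_on h01
      · exact ContinuousOn.intervalIntegrable (by rw [huIcc]; exact hωy.mul (hncont t ht))
      · exact (hint t ht).const_mul _
      · intro x hx
        exact mul_le_mul_of_nonneg_right ((hωM y hy).2 ⟨x, hx, rfl⟩) (hnnn t ht x hx)
    rw [intervalIntegral.integral_const_mul] at hcalc
    exact hcalc
  -- final barrier argument for p
  obtain ⟨x', hx', hx'eq⟩ := (hωM y hy).1
  have hωMpos : 0 < ωM y := hx'eq ▸ hωpos x' hx' y hy
  set δ := k₂ * ε / (2 * ωM y) with hδdef
  have hδpos : 0 < δ := div_pos (mul_pos hk₂ hε) (by linarith)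
  obtain ⟨T, hT1, hT⟩ := hρev δ hδpos
  set L := ωM y * ρstar / k₂ + ε with hLdef
  have hLpos : 0 < L := add_pos (div_pos (mul_pos hωMpos hρsp) hk₂) hε
  set c := k₂ * ε / 2 * L with hcdef
  have hcpos : 0 < c := mul_pos (by positivity) hLpos
  have hfd : ∀ t ≥ (1:ℝ), HasDerivAt (fun s => p s y) (χ t y * p t y - k₂ * (p t y)^2) t :=
    fun t ht => hpode y hy t (lt_of_lt_of_le one_pos ht)
  have hfderiv_le : ∀ t ≥ T, L ≤ p t y → χ t y * p t y - k₂ * (p t y)^2 ≤ -c := by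
    intro t ht hLf
    have ht0 : (0:ℝ) ≤ t := le_trans (by linarith) ht
    have hχ : χ t y ≤ ωM y * (ρstar + δ) :=
      le_trans (hχle t ht0) (mul_le_mul_of_nonneg_left (hT t ht) hωMpos.le)
    have hδval : ωM y * δ = k₂ * ε / 2 := by
      rw [hδdef]; field_simp
    have hLval : k₂ * L = ωM y * ρstar + k₂ * ε := by
      rw [hLdef]; field_simp
    have h1 : χ t y - k₂ * p t y ≤ -(k₂*ε/2) := by nlinarith
    have hppos : 0 ≤ p t y := hpnn t ht0 y hy
    nlinarith [mul_le_mul_of_nonneg_right h1 hppos,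
      mul_le_mul_of_nonneg_left hLf (by positivity : (0:ℝ) ≤ k₂*ε/2)]
  -- step 1: p gets below L at some time
  have hstep1 : ∃ t₁ ≥ T, p t₁ y ≤ L := by
    by_contra hno; push_neg at hno
    have hfT : 0 ≤ p T y := hpnn T (by linarith) y hy
    set t₂ := T + (p T y + 1)/c with ht₂def
    have ht₂T : T ≤ t₂ := by
      have h0 : 0 ≤ (p T y + 1)/c := div_nonneg (by linarith) hcpos.le
      rw [ht₂def]; linarith
    have hlin : p t₂ y ≤ p T y - c * (t₂ - T) := by
      refine linDecayAux (f := fun u => p u y)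
        (f' := fun u => χ u y * p u y - k₂ * (p u y)^2) ht₂T ?_ ?_
      · intro u hu; exact hfd u (le_trans hT1 hu.1)
      · intro u hu; exact hfderiv_le u hu.1 (hno u hu.1).le
    have ht₂sub : t₂ - T = (p T y + 1)/c := by rw [ht₂def]; ring
    have hval : c * (t₂ - T) = p T y + 1 := by
      rw [ht₂sub, mul_div_cancel₀ _ hcpos.ne']
    have hft₂ : 0 ≤ p t₂ y := hpnn t₂ (by linarith) y hy
    linarith
  obtain ⟨t₁, ht₁T, ht₁⟩ := hstep1
  rw [Filter.eventually_atTop]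
  refine ⟨t₁, fun t ht => ?_⟩
  show p t y ≤ ωM y * ρstar / k₂ + ε
  rw [← hLdef]
  by_contra hgt; push_neg at hgt
  set S := {u : ℝ | u ∈ Set.Icc t₁ t ∧ p u y ≤ L} with hSdef
  have hSne : t₁ ∈ S := ⟨⟨le_refl _, ht⟩, ht₁⟩
  have hSbdd : BddAbove S := ⟨t, fun u hu => hu.1.2⟩
  set s := sSup S with hs
  have hst₁ : t₁ ≤ s := le_csSup hSbdd hSne
  have hst : s ≤ t := csSup_le ⟨t₁, hSne⟩ (fun u hu => hu.1.2)
  have hs1 : (1:ℝ) ≤ s := le_trans (le_trans hT1 ht₁T) hst₁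
  have hfs : p s y ≤ L := by
    by_contra hfsgt; push_neg at hfsgt
    have hcont : ContinuousAt (fun u => p u y) s := (hfd s hs1).continuousAt
    have hev : ∀ᶠ u in nhds s, L < p u y :=
      hcont.eventually_mem (isOpen_Ioi.mem_nhds hfsgt)
    obtain ⟨δ', hδ', hball⟩ := Metric.eventually_nhds_iff.mp hev
    obtain ⟨u, huS, hu⟩ := exists_lt_of_lt_csSup ⟨t₁, hSne⟩ (show s - δ' < s by linarith)
    have hus : u ≤ s := le_csSup hSbdd huS
    have hd : dist u s < δ' := by
      rw [Real.dist_eq, abs_sub_lt_iff]; constructor <;> linarith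
    exact absurd (hball hd) (not_lt.2 huS.2)
  have hslt : s < t := lt_of_le_of_ne hst (fun h => by rw [h] at hfs; linarith)
  have hmono : AntitoneOn (fun u => p u y) (Set.Icc s t) := by
    apply antitoneOn_of_deriv_nonpos (convex_Icc s t)
    · exact fun u hu => (hfd u (le_trans hs1 hu.1)).continuousAt.continuousWithinAt
    · intro u hu
      rw [interior_Icc] at hu
      exact ((hfd u (le_trans hs1 hu.1.le)).differentiableAt).differentiableWithinAt
    · intro u hu
      rw [interior_Icc] at hu
      have hu1 : (1:ℝ) ≤ u := le_trans hs1 hu.1.le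
      rw [(hfd u hu1).deriv]
      have hfu : L ≤ p u y := by
        by_contra hlt; push_neg at hlt
        have huS : u ∈ S := ⟨⟨le_trans hst₁ hu.1.le, hu.2.le⟩, hlt.le⟩
        exact absurd (le_csSup hSbdd huS) (not_le.2 hu.1)
      have := hfderiv_le u (le_trans (le_trans ht₁T hst₁) hu.1.le) hfu
      linarith
  have hft := hmono (Set.left_mem_Icc.2 hst) (Set.right_mem_Icc.2 hst) hst
  simp only at hft
  linarith
end

section
/- Under the integro-differential system (ide), for every y ∈ [0,1], limsup_{t→∞} ℓ(t,y) ≤ ℓ̄(y) := p̄(y)/k₁, where p̄(y) = ω^M(y) ρ⋆ / k₂, ω^M(y) = max_{x∈[0,1]} ω(x,y), and ρ⋆ = max_{x∈[0,1]} r(x)/d(x). -/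
open Set Filter Topology

private lemma expGronwall (f g : ℝ → ℝ) (s t c : ℝ) (hst : s ≤ t)
    (hderiv : ∀ u ∈ Set.Icc s t, HasDerivAt f (g u) u)
    (hineq : ∀ u ∈ Set.Icc s t, g u ≤ c * f u) :
    f t ≤ f s * Real.exp (c * (t - s)) := by
  set h : ℝ → ℝ := fun u => f u * Real.exp (-(c * u)) with hh
  have hderivh : ∀ u ∈ Set.Icc s t,
      HasDerivAt h ((g u - c * f u) * Real.exp (-(c * u))) u := by
    intro u hu
    have hlin : HasDerivAt (fun u : ℝ => -(c * u)) (-c) u := by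
      have h0 := ((hasDerivAt_id u).const_mul c).neg
      rw [mul_one] at h0
      exact h0
    have he := hlin.exp
    have := (hderiv u hu).mul he
    exact this.congr_deriv (by ring)
  have hanti : AntitoneOn h (Set.Icc s t) := by
    apply antitoneOn_of_deriv_nonpos (convex_Icc s t)
    · exact fun u hu => (hderivh u hu).continuousAt.continuousWithinAt
    · intro u hu
      rw [interior_Icc] at hu
      exact ((hderivh u (Set.Ioo_subset_Icc_self hu)).differentiableAt).differentiableWithinAt
    · intro u hu
      rw [interior_Icc] at hu
      rw [(hderivh u (Set.Ioo_subset_Icc_self hu)).deriv]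
      have h1 := hineq u (Set.Ioo_subset_Icc_self hu)
      have h2 := Real.exp_nonneg (-(c * u))
      nlinarith
  have h1 : h t ≤ h s := hanti (Set.left_mem_Icc.mpr hst) (Set.right_mem_Icc.mpr hst) hst
  have h2 := mul_le_mul_of_nonneg_right h1 (Real.exp_pos (c * t)).le
  calc f t = f t * Real.exp (-(c * t)) * Real.exp (c * t) := by
        rw [mul_assoc, ← Real.exp_add, neg_add_cancel, Real.exp_zero, mul_one]
    _ ≤ f s * Real.exp (-(c * s)) * Real.exp (c * t) := h2
    _ = f s * Real.exp (c * (t - s)) := by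
        rw [mul_assoc, ← Real.exp_add]
        have : -(c * s) + c * t = c * (t - s) := by ring
        rw [this]

private lemma linGronwall (f f' : ℝ → ℝ) (A c T ε : ℝ) (hc : 0 < c) (hε : 0 < ε)
    (hd : ∀ t ≥ T, HasDerivAt f (f' t) t)
    (hle : ∀ t ≥ T, f' t ≤ A - c * f t) :
    ∀ᶠ t in Filter.atTop, f t ≤ A / c + ε := by
  have hA : c * (A / c) = A := mul_div_cancel₀ A hc.ne'
  have key : ∀ t ≥ T, f t ≤ A / c + (f T - A / c) * Real.exp (-c * (t - T)) := by
    intro t ht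
    have := expGronwall (fun u => f u - A / c) f' T t (-c) ht
      (fun u hu => (hd u hu.1).sub_const _)
      (fun u hu => by have h1 := hle u hu.1; nlinarith)
    simp only [neg_mul] at this ⊢
    linarith [this]
  have htend : Filter.Tendsto (fun t => A / c + (f T - A / c) * Real.exp (-c * (t - T)))
      Filter.atTop (𝓝 (A / c + (f T - A / c) * 0)) := by
    apply Filter.Tendsto.add tendsto_const_nhds
    apply Filter.Tendsto.const_mul
    apply Real.tendsto_exp_atBot.comp
    exact (tendsto_const_mul_atBot_of_neg (show -c < 0 by linarith)).mpr
      (tendsto_atTop_add_const_right _ _ tendsto_id)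
  rw [mul_zero] at htend
  have h2 := htend.eventually_lt_const (show A / c + 0 < A / c + ε by linarith)
  filter_upwards [h2, Filter.eventually_ge_atTop T] with t h2t hTt
  calc f t ≤ A / c + (f T - A / c) * Real.exp (-c * (t - T)) := key t hTt
    _ ≤ A / c + ε := by linarith [h2t]

/-- limsup ℓ(t,y) ≤ ℓ̄(y) = p̄(y)/k₁ = ω^M(y) ρ⋆ / (k₂ k₁) for every y. -/
theorem effector_cells_limsup_bound
    (n l p : ℝ → ℝ → ℝ) (r d μ ψ ν : ℝ → ℝ) (ω : ℝ → ℝ → ℝ)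
    (k₁ k₂ : ℝ) (ρ φ : ℝ → ℝ) (χ : ℝ → ℝ → ℝ) (ρstar : ℝ) (ωM : ℝ → ℝ)
    (hk₁ : 0 < k₁) (hk₂ : 0 < k₂)
    (hrc : ContinuousOn r (Set.Icc 0 1)) (hdc : ContinuousOn d (Set.Icc 0 1))
    (hμc : ContinuousOn μ (Set.Icc 0 1)) (hψc : ContinuousOn ψ (Set.Icc 0 1))
    (hνc : ContinuousOn ν (Set.Icc 0 1))
    (hωc : ContinuousOn (fun q : ℝ × ℝ => ω q.1 q.2) (Set.Icc 0 1 ×ˢ Set.Icc 0 1))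
    (hrpos : ∀ x ∈ Set.Icc (0:ℝ) 1, 0 < r x)
    (hdpos : ∀ x ∈ Set.Icc (0:ℝ) 1, 0 < d x)
    (hμpos : ∀ x ∈ Set.Icc (0:ℝ) 1, 0 < μ x)
    (hψpos : ∀ y ∈ Set.Icc (0:ℝ) 1, 0 < ψ y)
    (hνpos : ∀ y ∈ Set.Icc (0:ℝ) 1, 0 < ν y)
    (hωpos : ∀ x ∈ Set.Icc (0:ℝ) 1, ∀ y ∈ Set.Icc (0:ℝ) 1, 0 < ω x y)
    (hρdef : ∀ t, ρ t = ∫ x in (0:ℝ)..1, n t x)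
    (hφdef : ∀ t, φ t = ∫ y in (0:ℝ)..1, ψ y * l t y)
    (hχdef : ∀ t y, χ t y = ∫ x in (0:ℝ)..1, ω x y * n t x)
    (hnode : ∀ x ∈ Set.Icc (0:ℝ) 1, ∀ t > (0:ℝ),
      HasDerivAt (fun s => n s x) ((r x - d x * ρ t - μ x * φ t) * n t x) t)
    (hlode : ∀ y ∈ Set.Icc (0:ℝ) 1, ∀ t > (0:ℝ),
      HasDerivAt (fun s => l s y) (p t y - (ν y * ρ t + k₁) * l t y) t)
    (hpode : ∀ y ∈ Set.Icc (0:ℝ) 1, ∀ t > (0:ℝ),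
      HasDerivAt (fun s => p s y) (χ t y * p t y - k₂ * (p t y) ^ 2) t)
    (hnnn : ∀ t ≥ (0:ℝ), ∀ x ∈ Set.Icc (0:ℝ) 1, 0 ≤ n t x)
    (hlnn : ∀ t ≥ (0:ℝ), ∀ y ∈ Set.Icc (0:ℝ) 1, 0 ≤ l t y)
    (hpnn : ∀ t ≥ (0:ℝ), ∀ y ∈ Set.Icc (0:ℝ) 1, 0 ≤ p t y)
    (hncont : ∀ t ≥ (0:ℝ), ContinuousOn (n t) (Set.Icc 0 1))
    (hlcont : ∀ t ≥ (0:ℝ), ContinuousOn (l t) (Set.Icc 0 1))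
    (hpcont : ∀ t ≥ (0:ℝ), ContinuousOn (p t) (Set.Icc 0 1))
    (hρstar : IsGreatest ((fun x => r x / d x) '' Set.Icc (0:ℝ) 1) ρstar)
    (hωM : ∀ y ∈ Set.Icc (0:ℝ) 1, IsGreatest ((fun x => ω x y) '' Set.Icc (0:ℝ) 1) (ωM y))
    :
    ∀ y ∈ Set.Icc (0:ℝ) 1, ∀ ε > 0, ∀ᶠ t in Filter.atTop,
      l t y ≤ ωM y * ρstar / k₂ / k₁ + ε := by
  intro y hy ε hε
  have h01 : (0:ℝ) ≤ 1 := zero_le_one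
  have huIcc : Set.uIcc (0:ℝ) 1 = Set.Icc 0 1 := Set.uIcc_of_le h01
  -- basic nonnegativity
  have hρnn : ∀ t ≥ (0:ℝ), 0 ≤ ρ t := by
    intro t ht
    rw [hρdef]
    exact intervalIntegral.integral_nonneg h01 (fun x hx => hnnn t ht x hx)
  have hφnn : ∀ t ≥ (0:ℝ), 0 ≤ φ t := by
    intro t ht
    rw [hφdef]
    exact intervalIntegral.integral_nonneg h01
      (fun z hz => mul_nonneg (hψpos z hz).le (hlnn t ht z hz))
  -- constants
  obtain ⟨xr, hxr, hxrmax⟩ := isCompact_Icc.exists_isMaxOn ⟨0, Set.left_mem_Icc.mpr h01⟩ hrc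
  set rM := r xr with hrM
  have hrMpos : 0 < rM := hrpos xr hxr
  have hrle : ∀ x ∈ Set.Icc (0:ℝ) 1, r x ≤ rM := fun x hx => hxrmax hx
  obtain ⟨xd, hxd, hxdmin⟩ := isCompact_Icc.exists_isMinOn ⟨0, Set.left_mem_Icc.mpr h01⟩ hdc
  set dm := d xd with hdm
  have hdmpos : 0 < dm := hdpos xd hxd
  have hdge : ∀ x ∈ Set.Icc (0:ℝ) 1, dm ≤ d x := fun x hx => hxdmin hx
  have hρstarpos : 0 < ρstar := by
    obtain ⟨x0, hx0, hx0e⟩ := hρstar.1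
    rw [← hx0e]
    exact div_pos (hrpos x0 hx0) (hdpos x0 hx0)
  have hωMpos : 0 < ωM y := by
    obtain ⟨x0, hx0, hx0e⟩ := (hωM y hy).1
    rw [← hx0e]
    exact hωpos x0 hx0 y hy
  have hrd : ∀ x ∈ Set.Icc (0:ℝ) 1, r x ≤ d x * ρstar := by
    intro x hx
    have h1 : r x / d x ≤ ρstar := hρstar.2 ⟨x, hx, rfl⟩
    have h2 := hdpos x hx
    calc r x = d x * (r x / d x) := by field_simp
      _ ≤ d x * ρstar := by exact mul_le_mul_of_nonneg_left h1 h2.le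
  set δ : ℝ := k₂ * k₁ * ε / (4 * ωM y) with hδ
  have hδpos : 0 < δ := by positivity
  -- per-x exponential bound
  have hbnd : ∀ x ∈ Set.Icc (0:ℝ) 1, ∀ s t c : ℝ, 0 < s → s ≤ t →
      (∀ u ∈ Set.Icc s t, r x - d x * ρ u - μ x * φ u ≤ c) →
      n t x ≤ n s x * Real.exp (c * (t - s)) := by
    intro x hx s t c hs hst hco
    refine expGronwall (fun u => n u x)
      (fun u => (r x - d x * ρ u - μ x * φ u) * n u x) s t c hst
      (fun u hu => hnode x hx u (lt_of_lt_of_le hs hu.1)) ?_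
    intro u hu
    have hun : 0 ≤ n u x := hnnn u (le_trans hs.le hu.1) x hx
    exact mul_le_mul_of_nonneg_right (hco u hu) hun
  -- integral comparison for ρ
  have hρle : ∀ s t K : ℝ, 0 ≤ s → 0 ≤ t → 0 ≤ K →
      (∀ x ∈ Set.Icc (0:ℝ) 1, n t x ≤ n s x * K) → ρ t ≤ ρ s * K := by
    intro s t K hs ht hK hle
    rw [hρdef, hρdef]
    have hint1 : IntervalIntegrable (n t) MeasureTheory.volume 0 1 :=
      ((hncont t ht).mono huIcc.subset).intervalIntegrable
    have hint2 : IntervalIntegrable (fun x => n s x * K) MeasureTheory.volume 0 1 :=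
      (((hncont s hs).mono huIcc.subset).mul continuousOn_const).intervalIntegrable
    calc (∫ x in (0:ℝ)..1, n t x) ≤ ∫ x in (0:ℝ)..1, n s x * K :=
          intervalIntegral.integral_mono_on h01 hint1 hint2 hle
      _ = (∫ x in (0:ℝ)..1, n s x) * K := by
          rw [intervalIntegral.integral_mul_const]
  -- ρ growth bound
  have hρgrow : ∀ s t : ℝ, 0 < s → s ≤ t → ρ t ≤ ρ s * Real.exp (rM * (t - s)) := by
    intro s t hs hst
    refine hρle s t _ hs.le (hs.le.trans hst) (Real.exp_nonneg _) ?_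
    intro x hx
    refine hbnd x hx s t rM hs hst ?_
    intro u hu
    have h1 : 0 ≤ d x * ρ u := mul_nonneg (hdpos x hx).le (hρnn u (hs.le.trans hu.1))
    have h2 : 0 ≤ μ x * φ u := mul_nonneg (hμpos x hx).le (hφnn u (hs.le.trans hu.1))
    linarith [hrle x hx]
  -- ρ decay when large
  have hρdecay : ∀ s t : ℝ, 0 < s → s ≤ t → (∀ u ∈ Set.Icc s t, ρstar + δ ≤ ρ u) →
      ρ t ≤ ρ s * Real.exp (-(dm * δ) * (t - s)) := by
    intro s t hs hst hbig
    refine hρle s t _ hs.le (hs.le.trans hst) (Real.exp_nonneg _) ?_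
    intro x hx
    refine hbnd x hx s t _ hs hst ?_
    intro u hu
    have h2 : 0 ≤ μ x * φ u := mul_nonneg (hμpos x hx).le (hφnn u (hs.le.trans hu.1))
    have h3 := hbig u hu
    have h4 := hrd x hx
    have h5 := hdge x hx
    have h6 := hdpos x hx
    nlinarith
  -- ρ nonincreasing when ≥ ρstar
  have hρanti : ∀ s t : ℝ, 0 < s → s ≤ t → (∀ u ∈ Set.Icc s t, ρstar ≤ ρ u) →
      ρ t ≤ ρ s := by
    intro s t hs hst hbig
    have := hρle s t 1 hs.le (hs.le.trans hst) zero_le_one ?_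
    · linarith [this]
    intro x hx
    have := hbnd x hx s t 0 hs hst ?_
    · simpa using this
    intro u hu
    have h2 : 0 ≤ μ x * φ u := mul_nonneg (hμpos x hx).le (hφnn u (hs.le.trans hu.1))
    have h3 := hbig u hu
    have h4 := hrd x hx
    have h6 := hdpos x hx
    nlinarith
  -- there exist arbitrarily late times with ρ ≤ ρstar + δ
  have key1 : ∀ T : ℝ, 0 < T → ∃ t, T ≤ t ∧ ρ t ≤ ρstar + δ := by
    intro T hT
    by_contra hno
    push_neg at hno
    have hdec : ∀ t ≥ T, ρ t ≤ ρ T * Real.exp (-(dm * δ) * (t - T)) := by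
      intro t ht
      exact hρdecay T t hT ht (fun u hu => (hno u hu.1).le)
    have htend : Filter.Tendsto (fun t => ρ T * Real.exp (-(dm * δ) * (t - T)))
        Filter.atTop (𝓝 (ρ T * 0)) := by
      apply Filter.Tendsto.const_mul
      apply Real.tendsto_exp_atBot.comp
      exact (tendsto_const_mul_atBot_of_neg (neg_lt_zero.mpr (by positivity))).mpr
        (tendsto_atTop_add_const_right _ _ tendsto_id)
    rw [mul_zero] at htend
    have h2 := htend.eventually_lt_const (show (0:ℝ) < ρstar + δ by linarith)
    obtain ⟨t, h2t, hTt⟩ := (h2.and (Filter.eventually_ge_atTop T)).exists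
    exact absurd ((hdec t hTt).trans h2t.le) (not_le.mpr (hno t hTt))
  -- invariance
  have key2 : ∀ t₁ t₂ : ℝ, 0 < t₁ → t₁ ≤ t₂ → ρ t₁ ≤ ρstar + δ → ρ t₂ ≤ ρstar + δ := by
    intro t₁ t₂ ht₁ h12 hρ1
    by_contra h2
    push_neg at h2
    set S : Set ℝ := {u | u ∈ Set.Icc t₁ t₂ ∧ ρ u ≤ ρstar + δ} with hS
    have hSne : S.Nonempty := ⟨t₁, ⟨Set.left_mem_Icc.mpr h12, hρ1⟩⟩
    have hSbdd : BddAbove S := ⟨t₂, fun u hu => hu.1.2⟩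
    set s := sSup S with hs
    have hst₁ : t₁ ≤ s := le_csSup hSbdd ⟨Set.left_mem_Icc.mpr h12, hρ1⟩
    have hst₂ : s ≤ t₂ := csSup_le hSne (fun u hu => hu.1.2)
    have hspos : 0 < s := lt_of_lt_of_le ht₁ hst₁
    have claim : ∀ η : ℝ, 0 < η → ρ t₂ ≤ (ρstar + δ) * Real.exp (rM * (2 * η)) := by
      intro η hη
      obtain ⟨u, huS, hus⟩ := exists_lt_of_lt_csSup hSne (show s - η < s by linarith)
      have hule : u ≤ s := le_csSup hSbdd huS
      have hupos : 0 < u := lt_of_lt_of_le ht₁ huS.1.1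
      set v := min (s + η) t₂ with hv
      have huv : u ≤ v := le_min (by linarith) huS.1.2
      have hvt₂ : v ≤ t₂ := min_le_right _ _
      have hvpos : 0 < v := lt_of_lt_of_le hupos huv
      -- on [v, t₂], ρ ≥ ρstar
      have hbig : ∀ w ∈ Set.Icc v t₂, ρstar ≤ ρ w := by
        intro w hw
        rcases lt_or_ge s w with hsw | hws
        · -- w > s, so w ∉ S
          by_contra hcon
          push_neg at hcon
          rcases le_or_gt (ρ w) (ρstar + δ) with hwle | hwgt
          · have hwS : w ∈ S := ⟨⟨le_trans hst₁ hsw.le, hw.2⟩, hwle⟩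
            exact absurd (le_csSup hSbdd hwS) (not_le.mpr hsw)
          · linarith [hδpos]
        · -- w ≤ s forces v = t₂ and w = t₂
          have hvt : v = t₂ := by
            rcases le_or_gt (s + η) t₂ with hcase | hcase
            · exfalso
              have hve : v = s + η := min_eq_left hcase
              have : s + η ≤ w := hve ▸ hw.1
              linarith
            · exact min_eq_right hcase.le
          have hwt : w = t₂ := le_antisymm hw.2 (hvt ▸ hw.1)
          rw [hwt]; linarith
      have step2 : ρ t₂ ≤ ρ v := hρanti v t₂ hvpos hvt₂ hbig
      have step1 : ρ v ≤ ρ u * Real.exp (rM * (v - u)) := hρgrow u v hupos huv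
      have hvsη : v - u ≤ 2 * η := by
        have : v ≤ s + η := min_le_left _ _
        linarith
      have hexp : Real.exp (rM * (v - u)) ≤ Real.exp (rM * (2 * η)) :=
        Real.exp_le_exp.mpr (mul_le_mul_of_nonneg_left hvsη hrMpos.le)
      have hρu : ρ u ≤ ρstar + δ := huS.2
      have hρunn : 0 ≤ ρ u := hρnn u hupos.le
      calc ρ t₂ ≤ ρ v := step2
        _ ≤ ρ u * Real.exp (rM * (v - u)) := step1
        _ ≤ (ρstar + δ) * Real.exp (rM * (v - u)) :=
            mul_le_mul_of_nonneg_right hρu (Real.exp_nonneg _)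
        _ ≤ (ρstar + δ) * Real.exp (rM * (2 * η)) :=
            mul_le_mul_of_nonneg_left hexp (by linarith)
    -- take η → 0
    have htend : Filter.Tendsto (fun η : ℝ => (ρstar + δ) * Real.exp (rM * (2 * η)))
        (nhdsWithin 0 (Set.Ioi 0)) (𝓝 ((ρstar + δ) * Real.exp (rM * (2 * 0)))) := by
      apply Filter.Tendsto.mono_left _ nhdsWithin_le_nhds
      have hcont : Continuous fun η : ℝ => (ρstar + δ) * Real.exp (rM * (2 * η)) :=
        continuous_const.mul (Real.continuous_exp.comp
          (continuous_const.mul (continuous_const.mul continuous_id)))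
      exact hcont.tendsto 0
    have hev : ∀ᶠ η in nhdsWithin (0:ℝ) (Set.Ioi 0),
        ρ t₂ ≤ (ρstar + δ) * Real.exp (rM * (2 * η)) :=
      eventually_mem_nhdsWithin.mono (fun η hη => claim η hη)
    have := ge_of_tendsto htend hev
    simp only [mul_zero, Real.exp_zero, mul_one] at this
    linarith
  -- eventual bound on ρ
  obtain ⟨t₁, ht₁ge, ht₁ρ⟩ := key1 1 one_pos
  have ht₁pos : 0 < t₁ := lt_of_lt_of_le one_pos ht₁ge
  have hρbound : ∀ t ≥ t₁, ρ t ≤ ρstar + δ := fun t ht => key2 t₁ t ht₁pos ht ht₁ρ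
  -- χ bound
  have hχle : ∀ t ≥ (0:ℝ), χ t y ≤ ωM y * ρ t := by
    intro t ht
    rw [hχdef, hρdef, ← intervalIntegral.integral_const_mul]
    have hωcy : ContinuousOn (fun x => ω x y) (Set.Icc 0 1) := by
      have hmk : ContinuousOn (fun x : ℝ => ((x, y) : ℝ × ℝ)) (Set.Icc 0 1) :=
        (continuous_id.prodMk continuous_const).continuousOn
      exact hωc.comp hmk (fun x hx => Set.mk_mem_prod hx hy)
    have hint1 : IntervalIntegrable (fun x => ω x y * n t x) MeasureTheory.volume 0 1 :=
      (((hωcy.mul (hncont t ht))).mono huIcc.subset).intervalIntegrable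
    have hint2 : IntervalIntegrable (fun x => ωM y * n t x) MeasureTheory.volume 0 1 :=
      ((continuousOn_const.mul (hncont t ht)).mono huIcc.subset).intervalIntegrable
    apply intervalIntegral.integral_mono_on h01 hint1 hint2
    intro x hx
    exact mul_le_mul_of_nonneg_right ((hωM y hy).2 ⟨x, hx, rfl⟩) (hnnn t ht x hx)
  -- eventual bound on p
  set a := ωM y * (ρstar + δ) with ha
  have hapos : 0 < a := mul_pos hωMpos (by linarith)
  have hpev : ∀ᶠ t in Filter.atTop, p t y ≤ a ^ 2 / k₂ / a + k₁ * ε / 4 := by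
    refine linGronwall (fun t => p t y) (fun t => χ t y * p t y - k₂ * (p t y) ^ 2)
      (a ^ 2 / k₂) a t₁ (k₁ * ε / 4) hapos (by positivity)
      (fun t ht => hpode y hy t (lt_of_lt_of_le ht₁pos ht)) ?_
    intro t ht
    have htnn : (0:ℝ) ≤ t := ht₁pos.le.trans ht
    have h1 : χ t y ≤ a := (hχle t htnn).trans
      (mul_le_mul_of_nonneg_left (hρbound t ht) hωMpos.le)
    have hp := hpnn t htnn y hy
    have h2 : χ t y * p t y ≤ a * p t y := mul_le_mul_of_nonneg_right h1 hp
    have hdiv : a ^ 2 / k₂ * k₂ = a ^ 2 := div_mul_cancel₀ _ hk₂.ne'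
    nlinarith [sq_nonneg (a - k₂ * p t y)]
  have haa : a ^ 2 / k₂ / a = a / k₂ := by
    field_simp
  rw [Filter.eventually_atTop] at hpev
  obtain ⟨T₂, hT₂⟩ := hpev
  set T₃ := max T₂ t₁ with hT₃
  have hT₃pos : 0 < T₃ := lt_of_lt_of_le ht₁pos (le_max_right _ _)
  set P := ωM y * ρstar / k₂ + k₁ * ε / 2 with hP
  have hPkey : a / k₂ = ωM y * ρstar / k₂ + k₁ * ε / 4 := by
    rw [ha, hδ]
    field_simp
  have hpP : ∀ t ≥ T₃, p t y ≤ P := by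
    intro t ht
    have := hT₂ t (le_trans (le_max_left _ _) ht)
    rw [haa, hPkey] at this
    rw [hP]
    linarith
  -- eventual bound on l
  have hlev := linGronwall (fun t => l t y) (fun t => p t y - (ν y * ρ t + k₁) * l t y)
    P k₁ T₃ (ε / 4) hk₁ (by linarith)
    (fun t ht => hlode y hy t (lt_of_lt_of_le hT₃pos ht)) ?_
  · have hfinal : P / k₁ + ε / 4 ≤ ωM y * ρstar / k₂ / k₁ + ε := by
      have hPk : P / k₁ = ωM y * ρstar / k₂ / k₁ + ε / 2 := by
        rw [hP]
        field_simp
      linarith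
    filter_upwards [hlev] with t htl
    linarith
  · intro t ht
    have htnn : (0:ℝ) ≤ t := hT₃pos.le.trans ht
    have h1 := hpP t ht
    have h2 : 0 ≤ ν y * ρ t * l t y :=
      mul_nonneg (mul_nonneg (hνpos y hy).le (hρnn t htnn)) (hlnn t htnn y hy)
    have h3 : (ν y * ρ t + k₁) * l t y = ν y * ρ t * l t y + k₁ * l t y := by ring
    show p t y - (ν y * ρ t + k₁) * l t y ≤ P - k₁ * l t y
    linarith
end

section
/- Under the integro-differential system (ide), the immune response φ(t) = ∫₀¹ ψ(y) ℓ(t,y) dy satisfies limsup_{t→∞} φ(t) ≤ φ̄ := ∫₀¹ ψ(y) ℓ̄(y) dy, where ℓ̄(y) = ω^M(y) ρ⋆ / (k₁ k₂), ω^M(y) = max_{x∈[0,1]} ω(x,y), and ρ⋆ = max_{x∈[0,1]} r(x)/d(x). -/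
open Set Filter MeasureTheory intervalIntegral

private lemma antitone_aux {f f' : ℝ → ℝ} {t₀ t₁ : ℝ} (h : t₀ ≤ t₁)
    (hd : ∀ s ∈ Icc t₀ t₁, HasDerivAt f (f' s) s)
    (hle : ∀ s ∈ Ioo t₀ t₁, f' s ≤ 0) : f t₁ ≤ f t₀ := by
  have hA : AntitoneOn f (Icc t₀ t₁) := by
    apply antitoneOn_of_deriv_nonpos (convex_Icc _ _)
    · exact fun s hs => (hd s hs).continuousAt.continuousWithinAt
    · intro s hs; rw [interior_Icc] at hs
      exact ((hd s (Ioo_subset_Icc_self hs)).differentiableAt).differentiableWithinAt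
    · intro s hs; rw [interior_Icc] at hs
      rw [(hd s (Ioo_subset_Icc_self hs)).deriv]; exact hle s hs
  exact hA (left_mem_Icc.2 h) (right_mem_Icc.2 h) h

private lemma gronwall_exp {f f' : ℝ → ℝ} {K t₀ t₁ : ℝ} (h : t₀ ≤ t₁)
    (hd : ∀ s ∈ Icc t₀ t₁, HasDerivAt f (f' s) s)
    (hle : ∀ s ∈ Ioo t₀ t₁, f' s ≤ K * f s) :
    f t₁ ≤ f t₀ * Real.exp (K * (t₁ - t₀)) := by
  have key : f t₁ * Real.exp (-K * t₁) ≤ f t₀ * Real.exp (-K * t₀) := by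
    apply antitone_aux (f' := fun s => f' s * Real.exp (-K*s) + f s * (Real.exp (-K*s) * -K)) h
    · intro s hs
      have he : HasDerivAt (fun s : ℝ => Real.exp (-K*s)) (Real.exp (-K*s) * -K) s := by
        simpa using ((hasDerivAt_id s).const_mul (-K)).exp
      exact (hd s hs).mul he
    · intro s hs
      have h1 : f' s - K * f s ≤ 0 := by linarith [hle s hs]
      have h2 : (0:ℝ) < Real.exp (-K*s) := Real.exp_pos _
      have : (f' s - K * f s) * Real.exp (-K*s) ≤ 0 := mul_nonpos_of_nonpos_of_nonneg h1 h2.le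
      nlinarith [this]
  have h3 : (0:ℝ) < Real.exp (-K * t₁) := Real.exp_pos _
  have h4 : Real.exp (K * (t₁ - t₀)) = Real.exp (-K * t₀) / Real.exp (-K * t₁) := by
    rw [← Real.exp_sub]; ring_nf
  rw [h4, ← mul_div_assoc, le_div_iff₀ h3]
  exact key

private lemma decay_lin {f f' : ℝ → ℝ} {c t₀ t₁ : ℝ} (h : t₀ ≤ t₁)
    (hd : ∀ s ∈ Icc t₀ t₁, HasDerivAt f (f' s) s)
    (hle : ∀ s ∈ Ioo t₀ t₁, f' s ≤ -c) :
    f t₁ ≤ f t₀ - c * (t₁ - t₀) := by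
  have key : f t₁ + c * t₁ ≤ f t₀ + c * t₀ := by
    apply antitone_aux (f' := fun s => f' s + c) h
    · intro s hs
      have hh := (hd s hs).add ((hasDerivAt_id s).const_mul c)
      simp only [mul_one] at hh
      exact hh
    · intro s hs; linarith [hle s hs]
  linarith

private lemma barrier {f f' : ℝ → ℝ} {a c T t : ℝ} (hc : 0 < c)
    (hd : ∀ s ≥ T, HasDerivAt f (f' s) s)
    (hslope : ∀ s ≥ T, a ≤ f s → f' s ≤ -c)
    (hTt : T ≤ t) (hquant : f T ≤ a + c * (t - T)) : f t ≤ a := by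
  by_contra hcon
  push_neg at hcon
  have hcont : ContinuousOn f (Icc T t) :=
    fun s hs => (hd s hs.1).continuousAt.continuousWithinAt
  set S := {s ∈ Icc T t | f s ≤ a} with hS
  by_cases hne : S.Nonempty
  · have hclosed : IsClosed S := hcont.preimage_isClosed_of_isClosed isClosed_Icc isClosed_Iic
    have hbdd : BddAbove S := BddAbove.mono (fun s hs => hs.1) (bddAbove_Icc)
    obtain ⟨t₃, ht₃S, hub⟩ : ∃ t₃, t₃ ∈ S ∧ ∀ s ∈ S, s ≤ t₃ :=
      ⟨sSup S, hclosed.csSup_mem hne hbdd, fun s hs => le_csSup hbdd hs⟩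
    have ht₃t : t₃ ≤ t := ht₃S.1.2
    have ht₃T : T ≤ t₃ := ht₃S.1.1
    have hlt : t₃ < t := lt_of_le_of_ne ht₃t (by rintro rfl; exact absurd ht₃S.2 (not_le.2 hcon))
    have hd2 : ∀ s ∈ Icc t₃ t, HasDerivAt f (f' s) s := fun s hs => hd s (ht₃T.trans hs.1)
    have hs2 : ∀ s ∈ Ioo t₃ t, f' s ≤ -c := by
      intro s hs
      apply hslope s (ht₃T.trans hs.1.le)
      by_contra hfs
      push_neg at hfs
      exact absurd (hub s ⟨⟨ht₃T.trans hs.1.le, hs.2.le⟩, hfs.le⟩) (not_le.2 hs.1)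
    have hdec := decay_lin (f := f) (f' := f') hlt.le hd2 hs2
    have : f t ≤ a := by
      have := ht₃S.2
      nlinarith
    exact absurd this (not_le.2 hcon)
  · rw [Set.not_nonempty_iff_eq_empty] at hne
    have hd2 : ∀ s ∈ Icc T t, HasDerivAt f (f' s) s := fun s hs => hd s hs.1
    have hs2 : ∀ s ∈ Ioo T t, f' s ≤ -c := by
      intro s hs
      apply hslope s hs.1.le
      by_contra hfs
      push_neg at hfs
      have : s ∈ S := ⟨Ioo_subset_Icc_self hs, hfs.le⟩
      rw [hne] at this
      exact this
    have hdec := decay_lin (f := f) (f' := f') hTt hd2 hs2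
    have : f t ≤ a := by linarith
    exact absurd this (not_le.2 hcon)



set_option maxHeartbeats 1000000 in
/-- limsup φ(t) ≤ φ̄ = ∫ ψ(y) ℓ̄(y) dy with ℓ̄(y) = ω^M(y) ρ⋆/(k₁k₂). -/
theorem immune_response_limsup_bound
    (n l p : ℝ → ℝ → ℝ) (r d μ ψ ν : ℝ → ℝ) (ω : ℝ → ℝ → ℝ)
    (k₁ k₂ : ℝ) (ρ φ : ℝ → ℝ) (χ : ℝ → ℝ → ℝ) (ρstar : ℝ) (ωM : ℝ → ℝ)
    (hk₁ : 0 < k₁) (hk₂ : 0 < k₂)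
    (hrc : ContinuousOn r (Set.Icc 0 1)) (hdc : ContinuousOn d (Set.Icc 0 1))
    (hμc : ContinuousOn μ (Set.Icc 0 1)) (hψc : ContinuousOn ψ (Set.Icc 0 1))
    (hνc : ContinuousOn ν (Set.Icc 0 1))
    (hωc : ContinuousOn (fun q : ℝ × ℝ => ω q.1 q.2) (Set.Icc 0 1 ×ˢ Set.Icc 0 1))
    (hrpos : ∀ x ∈ Set.Icc (0:ℝ) 1, 0 < r x)
    (hdpos : ∀ x ∈ Set.Icc (0:ℝ) 1, 0 < d x)
    (hμpos : ∀ x ∈ Set.Icc (0:ℝ) 1, 0 < μ x)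
    (hψpos : ∀ y ∈ Set.Icc (0:ℝ) 1, 0 < ψ y)
    (hνpos : ∀ y ∈ Set.Icc (0:ℝ) 1, 0 < ν y)
    (hωpos : ∀ x ∈ Set.Icc (0:ℝ) 1, ∀ y ∈ Set.Icc (0:ℝ) 1, 0 < ω x y)
    (hρdef : ∀ t, ρ t = ∫ x in (0:ℝ)..1, n t x)
    (hφdef : ∀ t, φ t = ∫ y in (0:ℝ)..1, ψ y * l t y)
    (hχdef : ∀ t y, χ t y = ∫ x in (0:ℝ)..1, ω x y * n t x)
    (hnode : ∀ x ∈ Set.Icc (0:ℝ) 1, ∀ t > (0:ℝ),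
      HasDerivAt (fun s => n s x) ((r x - d x * ρ t - μ x * φ t) * n t x) t)
    (hlode : ∀ y ∈ Set.Icc (0:ℝ) 1, ∀ t > (0:ℝ),
      HasDerivAt (fun s => l s y) (p t y - (ν y * ρ t + k₁) * l t y) t)
    (hpode : ∀ y ∈ Set.Icc (0:ℝ) 1, ∀ t > (0:ℝ),
      HasDerivAt (fun s => p s y) (χ t y * p t y - k₂ * (p t y) ^ 2) t)
    (hnnn : ∀ t ≥ (0:ℝ), ∀ x ∈ Set.Icc (0:ℝ) 1, 0 ≤ n t x)
    (hlnn : ∀ t ≥ (0:ℝ), ∀ y ∈ Set.Icc (0:ℝ) 1, 0 ≤ l t y)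
    (hpnn : ∀ t ≥ (0:ℝ), ∀ y ∈ Set.Icc (0:ℝ) 1, 0 ≤ p t y)
    (hncont : ∀ t ≥ (0:ℝ), ContinuousOn (n t) (Set.Icc 0 1))
    (hlcont : ∀ t ≥ (0:ℝ), ContinuousOn (l t) (Set.Icc 0 1))
    (hpcont : ∀ t ≥ (0:ℝ), ContinuousOn (p t) (Set.Icc 0 1))
    (hρstar : IsGreatest ((fun x => r x / d x) '' Set.Icc (0:ℝ) 1) ρstar)
    (hωM : ∀ y ∈ Set.Icc (0:ℝ) 1, IsGreatest ((fun x => ω x y) '' Set.Icc (0:ℝ) 1) (ωM y))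
    (φbar : ℝ)
    (hφbar : φbar = ∫ y in (0:ℝ)..1, ψ y * (ωM y * ρstar / (k₁ * k₂))) :
    ∀ ε > 0, ∀ᶠ t in Filter.atTop, φ t ≤ φbar + ε := by
  intro ε hε
  have h01 : (0:ℝ) ≤ 1 := zero_le_one
  have hne01 : (Set.Icc (0:ℝ) 1).Nonempty := Set.nonempty_Icc.2 h01
  have hInt : ∀ g : ℝ → ℝ, ContinuousOn g (Set.Icc 0 1) → IntervalIntegrable g volume 0 1 := by
    intro g hg
    exact (Set.uIcc_of_le h01 ▸ hg : ContinuousOn g (Set.uIcc 0 1)).intervalIntegrable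
  -- nonnegativity of ρ and φ
  have hρnn : ∀ t ≥ (0:ℝ), 0 ≤ ρ t := by
    intro t ht; rw [hρdef]
    exact intervalIntegral.integral_nonneg h01 (fun x hx => hnnn t ht x hx)
  have hφnn : ∀ t ≥ (0:ℝ), 0 ≤ φ t := by
    intro t ht; rw [hφdef]
    exact intervalIntegral.integral_nonneg h01
      (fun y hy => mul_nonneg (hψpos y hy).le (hlnn t ht y hy))
  -- extrema
  obtain ⟨xd, hxd, hdm⟩ := isCompact_Icc.exists_isMinOn hne01 hdc
  obtain ⟨xr, hxr, hrm⟩ := isCompact_Icc.exists_isMaxOn hne01 hrc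
  have hdm' : ∀ x ∈ Set.Icc (0:ℝ) 1, d xd ≤ d x := fun x hx => hdm hx
  have hrm' : ∀ x ∈ Set.Icc (0:ℝ) 1, r x ≤ r xr := fun x hx => hrm hx
  have hdmpos : 0 < d xd := hdpos xd hxd
  -- ρstar facts
  obtain ⟨xs, hxs, hxse⟩ := hρstar.1
  have hρstar_pos : 0 < ρstar := hxse ▸ div_pos (hrpos xs hxs) (hdpos xs hxs)
  have hrd : ∀ x ∈ Set.Icc (0:ℝ) 1, r x ≤ ρstar * d x := by
    intro x hx
    have h := hρstar.2 ⟨x, hx, rfl⟩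
    rw [div_le_iff₀ (hdpos x hx)] at h
    linarith
  -- ωM facts
  have hωMpos : ∀ y ∈ Set.Icc (0:ℝ) 1, 0 < ωM y := by
    intro y hy; obtain ⟨x, hx, hxe⟩ := (hωM y hy).1; exact hxe ▸ hωpos x hx y hy
  have hωMge : ∀ y ∈ Set.Icc (0:ℝ) 1, ∀ x ∈ Set.Icc (0:ℝ) 1, ω x y ≤ ωM y :=
    fun y hy x hx => (hωM y hy).2 ⟨x, hx, rfl⟩
  -- continuity of ωM
  have hωMc : ContinuousOn ωM (Set.Icc 0 1) := by
    have hu : UniformContinuousOn (fun q : ℝ × ℝ => ω q.1 q.2)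
        (Set.Icc 0 1 ×ˢ Set.Icc 0 1) :=
      (isCompact_Icc.prod isCompact_Icc).uniformContinuousOn_of_continuous hωc
    rw [Metric.uniformContinuousOn_iff] at hu
    rw [Metric.continuousOn_iff]
    intro y hy ε' hε'
    obtain ⟨δ, hδ, hδ'⟩ := hu ε' hε'
    refine ⟨δ, hδ, fun y' hy' hdist => ?_⟩
    have hdy : dist y' y < δ := hdist
    obtain ⟨x1, hx1, hx1e⟩ := (hωM y' hy').1
    obtain ⟨x2, hx2, hx2e⟩ := (hωM y hy).1
    have key : ∀ x ∈ Set.Icc (0:ℝ) 1, dist (ω x y') (ω x y) < ε' := by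
      intro x hx
      have hd1 : dist ((x, y') : ℝ × ℝ) (x, y) < δ := by
        rw [Prod.dist_eq]; simp only [dist_self]
        rw [max_eq_right dist_nonneg]; exact hdy
      exact hδ' (x, y') (Set.mk_mem_prod hx hy') (x, y) (Set.mk_mem_prod hx hy) hd1
    rw [Real.dist_eq, abs_sub_lt_iff]
    have k1 := key x1 hx1
    have k2 := key x2 hx2
    rw [Real.dist_eq, abs_sub_lt_iff] at k1 k2
    have hx1e' : ω x1 y' = ωM y' := hx1e
    have hx2e' : ω x2 y = ωM y := hx2e
    constructor
    · have h := hωMge y hy x1 hx1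
      linarith [k1.1]
    · have h := hωMge y' hy' x2 hx2
      linarith [k2.2]
  -- the constants
  obtain ⟨W, hWdef⟩ : ∃ x : ℝ, x = ∫ y in (0:ℝ)..1, ψ y * ωM y := ⟨_, rfl⟩
  obtain ⟨Sψ, hSdef⟩ : ∃ x : ℝ, x = ∫ y in (0:ℝ)..1, ψ y := ⟨_, rfl⟩
  have hWnn : 0 ≤ W := by
    rw [hWdef]
    exact intervalIntegral.integral_nonneg h01
      (fun y hy => mul_nonneg (hψpos y hy).le (hωMpos y hy).le)
  have hSnn : 0 ≤ Sψ := by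
    rw [hSdef]
    exact intervalIntegral.integral_nonneg h01 (fun y hy => (hψpos y hy).le)
  have hW1 : (0:ℝ) < W + 1 := by linarith
  have hS1 : (0:ℝ) < Sψ + 1 := by linarith
  obtain ⟨ε₁, hε₁def⟩ : ∃ x : ℝ, x = ε * k₁ * k₂ / (2 * (W + 1)) := ⟨_, rfl⟩
  obtain ⟨ε₂, hε₂def⟩ : ∃ x : ℝ, x = ε * k₁ / (4 * (Sψ + 1)) := ⟨_, rfl⟩
  obtain ⟨ε₃, hε₃def⟩ : ∃ x : ℝ, x = ε / (4 * (Sψ + 1)) := ⟨_, rfl⟩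
  have hε₁ : 0 < ε₁ := by rw [hε₁def]; exact div_pos (by positivity) (by linarith)
  have hε₂ : 0 < ε₂ := by rw [hε₂def]; exact div_pos (by positivity) (by linarith)
  have hε₃ : 0 < ε₃ := by rw [hε₃def]; exact div_pos hε (by linarith)
  -- growth estimate for ρ
  have hgrow : ∀ t₀ t₁ : ℝ, 0 < t₀ → t₀ ≤ t₁ →
      ρ t₁ ≤ ρ t₀ * Real.exp (r xr * (t₁ - t₀)) := by
    intro t₀ t₁ ht₀ ht01
    have hptw : ∀ x ∈ Set.Icc (0:ℝ) 1, n t₁ x ≤ n t₀ x * Real.exp (r xr * (t₁ - t₀)) := by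
      intro x hx
      apply gronwall_exp (f := fun s => n s x)
        (f' := fun s => (r x - d x * ρ s - μ x * φ s) * n s x) ht01
      · exact fun s hs => hnode x hx s (lt_of_lt_of_le ht₀ hs.1)
      · intro s hs
        have hs0 : (0:ℝ) ≤ s := (ht₀.trans_le hs.1.le).le
        have hnn := hnnn s hs0 x hx
        have hcoef : r x - d x * ρ s - μ x * φ s ≤ r xr := by
          have h1 : 0 ≤ d x * ρ s := mul_nonneg (hdpos x hx).le (hρnn s hs0)
          have h2 : 0 ≤ μ x * φ s := mul_nonneg (hμpos x hx).le (hφnn s hs0)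
          linarith [hrm' x hx]
        exact mul_le_mul_of_nonneg_right hcoef hnn
    have ht₁0 : (0:ℝ) ≤ t₁ := (ht₀.trans_le ht01).le
    rw [hρdef, hρdef]
    calc (∫ x in (0:ℝ)..1, n t₁ x)
        ≤ ∫ x in (0:ℝ)..1, n t₀ x * Real.exp (r xr * (t₁ - t₀)) :=
          intervalIntegral.integral_mono_on h01 (hInt _ (hncont t₁ ht₁0))
            ((hInt _ (hncont t₀ ht₀.le)).mul_const _) hptw
      _ = (∫ x in (0:ℝ)..1, n t₀ x) * Real.exp (r xr * (t₁ - t₀)) :=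
          intervalIntegral.integral_mul_const _ _
  -- decay estimate for ρ above the barrier
  obtain ⟨aρ, haρdef⟩ : ∃ x : ℝ, x = ρstar + ε₁ := ⟨_, rfl⟩
  have haρ : 0 < aρ := by rw [haρdef]; positivity
  obtain ⟨cρ, hcρdef⟩ : ∃ x : ℝ, x = d xd * ε₁ := ⟨_, rfl⟩
  have hcρ : 0 < cρ := by rw [hcρdef]; exact mul_pos hdmpos hε₁
  have hdecay : ∀ t₀ t₁ : ℝ, 0 < t₀ → t₀ ≤ t₁ → (∀ s ∈ Set.Ioo t₀ t₁, aρ ≤ ρ s) →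
      ρ t₁ ≤ ρ t₀ * Real.exp (-cρ * (t₁ - t₀)) := by
    intro t₀ t₁ ht₀ ht01 hbig
    have hptw : ∀ x ∈ Set.Icc (0:ℝ) 1, n t₁ x ≤ n t₀ x * Real.exp (-cρ * (t₁ - t₀)) := by
      intro x hx
      apply gronwall_exp (f := fun s => n s x)
        (f' := fun s => (r x - d x * ρ s - μ x * φ s) * n s x) ht01
      · exact fun s hs => hnode x hx s (lt_of_lt_of_le ht₀ hs.1)
      · intro s hs
        have hs0 : (0:ℝ) ≤ s := (ht₀.trans_le hs.1.le).le
        have hnn := hnnn s hs0 x hx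
        have hcoef : r x - d x * ρ s - μ x * φ s ≤ -cρ := by
          have h1 : 0 ≤ μ x * φ s := mul_nonneg (hμpos x hx).le (hφnn s hs0)
          have h2 := hrd x hx
          have h3 := hbig s hs
          have h4 := hdm' x hx
          have h5 := hdpos x hx
          nlinarith [mul_le_mul_of_nonneg_left (show ρstar - ρ s ≤ -ε₁ by linarith) h5.le,
            mul_le_mul_of_nonneg_right h4 hε₁.le]
        exact mul_le_mul_of_nonneg_right hcoef hnn
    have ht₁0 : (0:ℝ) ≤ t₁ := (ht₀.trans_le ht01).le
    rw [hρdef, hρdef]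
    calc (∫ x in (0:ℝ)..1, n t₁ x)
        ≤ ∫ x in (0:ℝ)..1, n t₀ x * Real.exp (-cρ * (t₁ - t₀)) :=
          intervalIntegral.integral_mono_on h01 (hInt _ (hncont t₁ ht₁0))
            ((hInt _ (hncont t₀ ht₀.le)).mul_const _) hptw
      _ = (∫ x in (0:ℝ)..1, n t₀ x) * Real.exp (-cρ * (t₁ - t₀)) :=
          intervalIntegral.integral_mul_const _ _
  -- Step A: eventually ρ ≤ aρ
  have stepA : ∃ T₁ ≥ (1:ℝ), ∀ t ≥ T₁, ρ t ≤ aρ := by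
    have hρ1 := hρnn 1 h01
    have hreach : ∃ t₀ ≥ (1:ℝ), ρ t₀ ≤ aρ := by
      by_contra hcon
      push_neg at hcon
      obtain ⟨t, htdef⟩ : ∃ x : ℝ, x = 1 + (ρ 1 + 1) / (cρ * aρ) := ⟨_, rfl⟩
      have htpos : 0 < (ρ 1 + 1) / (cρ * aρ) := div_pos (by linarith) (mul_pos hcρ haρ)
      have ht1 : (1:ℝ) ≤ t := by rw [htdef]; linarith
      have hct : cρ * (t - 1) = (ρ 1 + 1) / aρ := by
        rw [htdef]; field_simp; ring
      have hz : 0 < cρ * (t - 1) := by rw [hct]; positivity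
      have hdec := hdecay 1 t one_pos ht1 (fun s hs => (hcon s hs.1.le).le)
      have hexp : Real.exp (-cρ * (t - 1)) ≤ 1 / (cρ * (t - 1)) := by
        rw [neg_mul, Real.exp_neg]
        rw [inv_eq_one_div]
        apply one_div_le_one_div_of_le hz
        linarith [Real.add_one_le_exp (cρ * (t - 1))]
      have h6 : ρ t ≤ ρ 1 * (1 / (cρ * (t - 1))) :=
        hdec.trans (mul_le_mul_of_nonneg_left hexp hρ1)
      rw [hct] at h6
      have h7 : ρ 1 * (1 / ((ρ 1 + 1) / aρ)) = ρ 1 * aρ / (ρ 1 + 1) := by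
        field_simp
      have h8 : ρ 1 * aρ / (ρ 1 + 1) < aρ := by
        rw [div_lt_iff₀ (by linarith : (0:ℝ) < ρ 1 + 1)]
        nlinarith
      exact absurd (hcon t ht1) (not_lt.2 (by linarith))
    obtain ⟨T₁, hT₁1, hT₁ρ⟩ := hreach
    refine ⟨T₁, hT₁1, ?_⟩
    intro t ht
    by_contra hcon
    push_neg at hcon
    set Sb := {s ∈ Set.Icc T₁ t | ρ s ≤ aρ} with hSbdef
    have hmemT₁ : T₁ ∈ Sb := ⟨⟨le_refl _, ht⟩, hT₁ρ⟩
    have hne : Sb.Nonempty := ⟨T₁, hmemT₁⟩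
    have hbdd : BddAbove Sb := BddAbove.mono (fun s hs => hs.1) bddAbove_Icc
    obtain ⟨u, hmono, htend, humem⟩ := exists_seq_tendsto_sSup hne hbdd
    have ht₃T : T₁ ≤ sSup Sb := le_csSup hbdd hmemT₁
    have ht₃t : sSup Sb ≤ t := csSup_le hne (fun s hs => hs.1.2)
    have hρt₃ : ρ (sSup Sb) ≤ aρ := by
      have hbnd : ∀ k, ρ (sSup Sb) ≤ aρ * Real.exp (r xr * (sSup Sb - u k)) := by
        intro k
        have huk := humem k
        have h1 : u k ≤ sSup Sb := le_csSup hbdd huk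
        have h2 : 0 < u k := by linarith [huk.1.1]
        calc ρ (sSup Sb) ≤ ρ (u k) * Real.exp (r xr * (sSup Sb - u k)) := hgrow (u k) _ h2 h1
          _ ≤ aρ * Real.exp (r xr * (sSup Sb - u k)) :=
              mul_le_mul_of_nonneg_right huk.2 (Real.exp_pos _).le
      have hlim : Filter.Tendsto (fun k => aρ * Real.exp (r xr * (sSup Sb - u k)))
          Filter.atTop (nhds (aρ * Real.exp (r xr * (sSup Sb - sSup Sb)))) := by
        apply Filter.Tendsto.const_mul
        exact (Real.continuous_exp.tendsto _).comp
          ((tendsto_const_nhds.sub htend).const_mul _)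
      simp only [sub_self, mul_zero, Real.exp_zero, mul_one] at hlim
      exact ge_of_tendsto hlim (Filter.Eventually.of_forall hbnd)
    have hlt : sSup Sb < t := by
      rcases lt_or_eq_of_le ht₃t with h | h
      · exact h
      · rw [h] at hρt₃; linarith
    have hdec := hdecay (sSup Sb) t (by linarith) hlt.le (fun s hs => by
      by_contra hfs
      push_neg at hfs
      exact absurd (le_csSup hbdd ⟨⟨by linarith [hs.1], hs.2.le⟩, hfs.le⟩) (not_le.2 hs.1))
    have hexp1 : Real.exp (-cρ * (t - sSup Sb)) ≤ 1 := by
      rw [Real.exp_le_one_iff]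
      nlinarith
    nlinarith [Real.exp_pos (-cρ * (t - sSup Sb))]
  obtain ⟨T₁, hT₁1, hρle⟩ := stepA
  have hT₁0 : (0:ℝ) ≤ T₁ := by linarith
  -- χ bound
  have hχle : ∀ t ≥ T₁, ∀ y ∈ Set.Icc (0:ℝ) 1, χ t y ≤ ωM y * aρ := by
    intro t ht y hy
    have ht0 : (0:ℝ) ≤ t := le_trans hT₁0 ht
    rw [hχdef]
    have hωyc : ContinuousOn (fun x => ω x y) (Set.Icc 0 1) := by
      have hmap : Set.MapsTo (fun x : ℝ => (x, y)) (Set.Icc 0 1)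
          (Set.Icc (0:ℝ) 1 ×ˢ Set.Icc (0:ℝ) 1) := fun x hx => Set.mk_mem_prod hx hy
      exact hωc.comp ((continuous_id.prodMk continuous_const).continuousOn) hmap
    calc (∫ x in (0:ℝ)..1, ω x y * n t x)
        ≤ ∫ x in (0:ℝ)..1, ωM y * n t x := by
          apply intervalIntegral.integral_mono_on h01
            (hInt _ (hωyc.mul (hncont t ht0))) ((hInt _ (hncont t ht0)).const_mul _)
          exact fun x hx => mul_le_mul_of_nonneg_right (hωMge y hy x hx) (hnnn t ht0 x hx)
      _ = ωM y * ρ t := by rw [intervalIntegral.integral_const_mul, ← hρdef]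
      _ ≤ ωM y * aρ := mul_le_mul_of_nonneg_left (hρle t ht) (hωMpos y hy).le
  -- Step C: eventual bound on p
  obtain ⟨yP, hyP, hPM⟩ := isCompact_Icc.exists_isMaxOn hne01 (hpcont T₁ hT₁0)
  obtain ⟨c₂, hc₂def⟩ : ∃ x : ℝ, x = k₂ * (ε₂ * ε₂) := ⟨_, rfl⟩
  have hc₂ : 0 < c₂ := by rw [hc₂def]; positivity
  obtain ⟨T₂, hT₂def⟩ : ∃ x : ℝ, x = T₁ + max (p T₁ yP) 0 / c₂ := ⟨_, rfl⟩
  have hT₂T₁ : T₁ ≤ T₂ := hT₂def ▸ le_add_of_nonneg_right (div_nonneg (le_max_right _ _) hc₂.le)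
  have stepC : ∀ t ≥ T₂, ∀ y ∈ Set.Icc (0:ℝ) 1, p t y ≤ ωM y * aρ / k₂ + ε₂ := by
    intro t ht y hy
    have hay_nn : 0 ≤ ωM y * aρ / k₂ :=
      div_nonneg (mul_nonneg (hωMpos y hy).le haρ.le) hk₂.le
    apply barrier (f := fun s => p s y) (f' := fun s => χ s y * p s y - k₂ * (p s y) ^ 2) (T := T₁) (t := t) hc₂
    · exact fun s hs => hpode y hy s (by linarith)
    · intro s hs hps
      have hχ := hχle s hs y hy
      have hp0 : 0 ≤ p s y := hpnn s (by linarith) y hy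
      have h0 : ωM y * aρ ≤ (p s y - ε₂) * k₂ := by
        rw [← div_le_iff₀ hk₂]; linarith
      have h1 : χ s y * p s y ≤ (p s y - ε₂) * k₂ * p s y :=
        mul_le_mul_of_nonneg_right (hχ.trans h0) hp0
      have hpge : ε₂ ≤ p s y := by linarith
      nlinarith
    · linarith
    · have h1 : p T₁ y ≤ max (p T₁ yP) 0 := le_max_of_le_left (hPM hy)
      have h2 : max (p T₁ yP) 0 = c₂ * (T₂ - T₁) := by
        rw [hT₂def]; field_simp; ring
      have h3 : c₂ * (T₂ - T₁) ≤ c₂ * (t - T₁) :=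
        mul_le_mul_of_nonneg_left (by linarith) hc₂.le
      linarith
  -- Step D: eventual bound on l
  have hT₂0 : (0:ℝ) ≤ T₂ := le_trans hT₁0 hT₂T₁
  obtain ⟨yL, hyL, hLM⟩ := isCompact_Icc.exists_isMaxOn hne01 (hlcont T₂ hT₂0)
  obtain ⟨c₃, hc₃def⟩ : ∃ x : ℝ, x = k₁ * ε₃ := ⟨_, rfl⟩
  have hc₃ : 0 < c₃ := by rw [hc₃def]; exact mul_pos hk₁ hε₃
  obtain ⟨T₃, hT₃def⟩ : ∃ x : ℝ, x = T₂ + max (l T₂ yL) 0 / c₃ := ⟨_, rfl⟩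
  have hT₃T₂ : T₂ ≤ T₃ := hT₃def ▸ le_add_of_nonneg_right (div_nonneg (le_max_right _ _) hc₃.le)
  have stepD : ∀ t ≥ T₃, ∀ y ∈ Set.Icc (0:ℝ) 1,
      l t y ≤ (ωM y * aρ / k₂ + ε₂) / k₁ + ε₃ := by
    intro t ht y hy
    have hay_nn : 0 ≤ (ωM y * aρ / k₂ + ε₂) / k₁ :=
      div_nonneg (add_nonneg (div_nonneg (mul_nonneg (hωMpos y hy).le haρ.le) hk₂.le) hε₂.le)
        hk₁.le
    apply barrier (f := fun s => l s y) (f' := fun s => p s y - (ν y * ρ s + k₁) * l s y) (T := T₂) (t := t) hc₃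
    · exact fun s hs => hlode y hy s (by linarith)
    · intro s hs hls
      have hp := stepC s hs y hy
      have hl0 : 0 ≤ l s y := hlnn s (by linarith) y hy
      have hρ0 : 0 ≤ ρ s := hρnn s (by linarith)
      have hν0 : 0 ≤ ν y := (hνpos y hy).le
      have h0 : k₁ * ((ωM y * aρ / k₂ + ε₂) / k₁) = ωM y * aρ / k₂ + ε₂ := by
        field_simp
      nlinarith [mul_nonneg (mul_nonneg hν0 hρ0) hl0,
        mul_le_mul_of_nonneg_left hls hk₁.le]
    · linarith
    · have h1 : l T₂ y ≤ max (l T₂ yL) 0 := le_max_of_le_left (hLM hy)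
      have h2 : max (l T₂ yL) 0 = c₃ * (T₃ - T₂) := by
        rw [hT₃def]; field_simp; ring
      have h3 : c₃ * (T₃ - T₂) ≤ c₃ * (t - T₂) :=
        mul_le_mul_of_nonneg_left (by linarith) hc₃.le
      linarith
  -- Step E: conclude
  rw [Filter.eventually_atTop]
  refine ⟨T₃, fun t ht => ?_⟩
  have ht0 : (0:ℝ) ≤ t := le_trans (le_trans hT₂0 hT₃T₂) ht
  have hbc : ContinuousOn (fun y => ψ y * ((ωM y * aρ / k₂ + ε₂) / k₁ + ε₃))
      (Set.Icc 0 1) := by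
    apply hψc.mul
    exact ((((hωMc.mul continuousOn_const).div_const _).add continuousOn_const).div_const
      _).add continuousOn_const
  have h1 : φ t ≤ ∫ y in (0:ℝ)..1, ψ y * ((ωM y * aρ / k₂ + ε₂) / k₁ + ε₃) := by
    rw [hφdef]
    apply intervalIntegral.integral_mono_on h01 (hInt _ (hψc.mul (hlcont t ht0))) (hInt _ hbc)
    exact fun y hy => mul_le_mul_of_nonneg_left (stepD t ht y hy) (hψpos y hy).le
  have heq : ∀ y : ℝ, ψ y * ((ωM y * aρ / k₂ + ε₂) / k₁ + ε₃)
      = ψ y * (ωM y * ρstar / (k₁ * k₂)) + (ψ y * ωM y) * (ε₁ / (k₁ * k₂))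
        + ψ y * (ε₂ / k₁ + ε₃) := by
    intro y
    rw [haρdef]
    field_simp
    ring
  have hIA : IntervalIntegrable (fun y => ψ y * (ωM y * ρstar / (k₁ * k₂))) volume 0 1 :=
    hInt _ (hψc.mul ((hωMc.mul continuousOn_const).div_const _))
  have hIB : IntervalIntegrable (fun y => (ψ y * ωM y) * (ε₁ / (k₁ * k₂))) volume 0 1 :=
    (hInt _ (hψc.mul hωMc)).mul_const _
  have hIC : IntervalIntegrable (fun y => ψ y * (ε₂ / k₁ + ε₃)) volume 0 1 :=
    (hInt _ hψc).mul_const _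
  have hsplit : (∫ y in (0:ℝ)..1, ψ y * ((ωM y * aρ / k₂ + ε₂) / k₁ + ε₃))
      = φbar + W * (ε₁ / (k₁ * k₂)) + Sψ * (ε₂ / k₁ + ε₃) := by
    simp only [heq]
    rw [intervalIntegral.integral_add (hIA.add hIB) hIC,
      intervalIntegral.integral_add hIA hIB,
      intervalIntegral.integral_mul_const, intervalIntegral.integral_mul_const,
      ← hφbar, ← hWdef, ← hSdef]
  have hW2 : (0:ℝ) < 2 * (W + 1) := by linarith
  have hS2 : (0:ℝ) < 2 * (Sψ + 1) := by linarith
  have e1 : W * (ε₁ / (k₁ * k₂)) ≤ ε / 2 := by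
    have h : ε₁ / (k₁ * k₂) = ε / (2 * (W + 1)) := by
      rw [hε₁def]; field_simp
    rw [h, ← mul_div_assoc, div_le_div_iff₀ hW2 two_pos]
    nlinarith
  have e2 : Sψ * (ε₂ / k₁ + ε₃) ≤ ε / 2 := by
    have h : ε₂ / k₁ = ε / (4 * (Sψ + 1)) := by
      rw [hε₂def]; field_simp
    have h' : ε₂ / k₁ + ε₃ = ε / (2 * (Sψ + 1)) := by
      rw [h, hε₃def]; field_simp; ring
    rw [h', ← mul_div_assoc, div_le_div_iff₀ hS2 two_pos]
    nlinarith
  linarith [h1, hsplit, e1, e2]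
end

section
/- Non-autonomous logistic ODE lemma: let k₂ > 0, let a : [0,∞) → ℝ be continuous with a(t) → ā as t → ∞ for some ā ≥ 0, and let u : [0,∞) → (0,∞) solve u'(t) = [a(t) − k₂ u(t)] u(t) with u(0) > 0. Then u(t) → ā/k₂ as t → ∞. -/
open Filter Set Real

/-- Barrier lemma: if `u t₀ ≤ B` and whenever `u t = B` the derivative is negative,
then `u t ≤ B` for all `t ≥ t₀`. -/
lemma logistic_barrier {u f : ℝ → ℝ} {t₀ B : ℝ}
    (hd : ∀ t ≥ t₀, HasDerivAt u (f t) t)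
    (hB : ∀ t ≥ t₀, u t = B → f t < 0)
    (h0 : u t₀ ≤ B) : ∀ t ≥ t₀, u t ≤ B := by
  intro t ht
  have := image_le_of_deriv_right_lt_deriv_boundary (f := u) (f' := f) (a := t₀) (b := t)
    (B := fun _ => B) (B' := fun _ => 0)
    (fun x hx => ((hd x hx.1).continuousAt).continuousWithinAt)
    (fun x hx => (hd x hx.1).hasDerivWithinAt)
    h0 (fun x => hasDerivAt_const x B)
    (fun x hx hfx => hB x hx.1 hfx)
  exact this ⟨ht, le_rfl⟩

/-- Exponential decay contradiction: if `u' ≤ -c u` on `[T, ∞)` while `u > B > 0`, false. -/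
lemma logistic_decay {u f : ℝ → ℝ} {T c B : ℝ} (hc : 0 < c) (hBpos : 0 < B)
    (hu : ∀ t ≥ T, 0 < u t)
    (hd : ∀ t ≥ T, HasDerivAt u (f t) t)
    (hf : ∀ t ≥ T, f t ≤ -c * u t)
    (hlb : ∀ t ≥ T, B < u t) : False := by
  set g : ℝ → ℝ := fun t => Real.log (u t) + c * t with hg
  have hgd : ∀ t ≥ T, HasDerivAt g (f t / u t + c) t := by
    intro t ht
    have h1 : HasDerivAt (fun t => Real.log (u t)) ((u t)⁻¹ * f t) t :=
      (Real.hasDerivAt_log (hu t ht).ne').comp t (hd t ht)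
    have h2 : HasDerivAt (fun t => c * t) c t := by
      simpa using (hasDerivAt_id t).const_mul c
    have := h1.add h2
    rw [div_eq_inv_mul]; exact this
  have hanti : AntitoneOn g (Ici T) := by
    apply antitoneOn_of_deriv_nonpos (convex_Ici T)
    · exact fun x hx => ((hgd x hx).continuousAt).continuousWithinAt
    · intro x hx
      rw [interior_Ici] at hx
      exact (hgd x (le_of_lt hx)).differentiableAt.differentiableWithinAt
    · intro x hx
      rw [interior_Ici] at hx
      rw [(hgd x (le_of_lt hx)).deriv]
      have hux := hu x (le_of_lt hx)
      have : f x / u x ≤ -c := by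
        rw [div_le_iff₀ hux]
        calc f x ≤ -c * u x := hf x (le_of_lt hx)
        _ = -c * u x := rfl
      linarith
  set t := max T ((g T - Real.log B) / c) with hts
  have htT : T ≤ t := le_max_left _ _
  have h1 : g t ≤ g T := hanti (self_mem_Ici) htT htT
  have h2 : Real.log B < Real.log (u t) :=
    Real.log_lt_log hBpos (hlb t htT)
  have h3 : (g T - Real.log B) / c ≤ t := le_max_right _ _
  rw [div_le_iff₀ hc, mul_comm] at h3
  have h4 : g T = Real.log (u T) + c * T := rfl
  simp only [hg] at h1
  linarith

/-- Exponential growth contradiction: if `u' ≥ c u` on `[T, ∞)` while `0 < u < m`, false. -/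
lemma logistic_growth {u f : ℝ → ℝ} {T c m : ℝ} (hc : 0 < c) (hm : 0 < m)
    (hu : ∀ t ≥ T, 0 < u t)
    (hd : ∀ t ≥ T, HasDerivAt u (f t) t)
    (hf : ∀ t ≥ T, c * u t ≤ f t)
    (hub : ∀ t ≥ T, u t < m) : False := by
  set g : ℝ → ℝ := fun t => Real.log (u t) - c * t with hg
  have hgd : ∀ t ≥ T, HasDerivAt g (f t / u t - c) t := by
    intro t ht
    have h1 : HasDerivAt (fun t => Real.log (u t)) ((u t)⁻¹ * f t) t :=
      (Real.hasDerivAt_log (hu t ht).ne').comp t (hd t ht)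
    have h2 : HasDerivAt (fun t => c * t) c t := by
      simpa using (hasDerivAt_id t).const_mul c
    have := h1.sub h2
    rw [div_eq_inv_mul]; exact this
  have hmono : MonotoneOn g (Ici T) := by
    apply monotoneOn_of_deriv_nonneg (convex_Ici T)
    · exact fun x hx => ((hgd x hx).continuousAt).continuousWithinAt
    · intro x hx
      rw [interior_Ici] at hx
      exact (hgd x (le_of_lt hx)).differentiableAt.differentiableWithinAt
    · intro x hx
      rw [interior_Ici] at hx
      rw [(hgd x (le_of_lt hx)).deriv]
      have hux := hu x (le_of_lt hx)
      have : c ≤ f x / u x := by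
        rw [le_div_iff₀ hux]
        exact hf x (le_of_lt hx)
      linarith
  set t := max T ((Real.log m - g T) / c) with hts
  have htT : T ≤ t := le_max_left _ _
  have h1 : g T ≤ g t := hmono (self_mem_Ici) htT htT
  have h2 : Real.log (u t) < Real.log m :=
    Real.log_lt_log (hu t htT) (hub t htT)
  have h3 : (Real.log m - g T) / c ≤ t := le_max_right _ _
  rw [div_le_iff₀ hc, mul_comm] at h3
  have h4 : g T = Real.log (u T) - c * T := rfl
  simp only [hg] at h1
  linarith

/-- Non-autonomous logistic ODE lemma: if a(t) → ā ≥ 0 then the positive solution of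
u' = (a(t) − k₂ u) u converges to ā/k₂. -/
theorem nonautonomous_logistic_limit
    (k₂ : ℝ) (hk₂ : 0 < k₂) (a u : ℝ → ℝ) (abar : ℝ)
    (hac : ContinuousOn a (Set.Ici 0))
    (halim : Filter.Tendsto a Filter.atTop (nhds abar))
    (habar : 0 ≤ abar)
    (hupos : ∀ t ≥ (0:ℝ), 0 < u t)
    (hode : ∀ t ≥ (0:ℝ), HasDerivAt u ((a t - k₂ * u t) * u t) t) :
    Filter.Tendsto u Filter.atTop (nhds (abar / k₂)) := by
  set L := abar / k₂ with hL
  have hkL : k₂ * L = abar := by rw [hL]; field_simp [hk₂.ne']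
  have hLnn : 0 ≤ L := div_nonneg habar hk₂.le
  rw [Metric.tendsto_nhds]
  intro ε hε
  -- upper bound: eventually u t < L + ε
  have upper : ∀ᶠ t in atTop, u t < L + ε := by
    obtain ⟨T₀, hT₀⟩ := eventually_atTop.1
      (halim.eventually_lt_const (show abar < abar + k₂ * ε / 2 by nlinarith))
    set T := max T₀ 0 with hTs
    have hT0 : (0:ℝ) ≤ T := le_max_right _ _
    have haT : ∀ t ≥ T, a t < abar + k₂ * ε / 2 :=
      fun t ht => hT₀ t (le_trans (le_max_left _ _) ht)
    set B := L + 3/4 * ε with hBs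
    have hBpos : 0 < B := by simp only [hBs]; linarith
    have key : ∀ t ≥ T, u t = B → (a t - k₂ * u t) * u t < 0 := by
      intro t ht hut
      have hu := hupos t (le_trans hT0 ht)
      have h1 : a t - k₂ * u t < 0 := by
        rw [hut]; simp only [hBs]; nlinarith [haT t ht]
      exact mul_neg_of_neg_of_pos h1 hu
    by_cases hcase : ∃ t₀ ≥ T, u t₀ ≤ B
    · obtain ⟨t₀, ht₀, hu₀⟩ := hcase
      have hbar := logistic_barrier
        (fun t ht => hode t (le_trans (le_trans hT0 ht₀) ht))
        (fun t ht => key t (le_trans ht₀ ht)) hu₀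
      filter_upwards [eventually_ge_atTop t₀] with t ht
      have := hbar t ht
      simp only [hBs] at this; linarith
    · push_neg at hcase
      exfalso
      refine logistic_decay (c := k₂ * ε / 4) (B := B) (by positivity) hBpos
        (fun t ht => hupos t (le_trans hT0 ht))
        (fun t ht => hode t (le_trans hT0 ht)) ?_ hcase
      intro t ht
      have hu := hupos t (le_trans hT0 ht)
      have hB := hcase t ht
      have ha := haT t ht
      have hmul : k₂ * B < k₂ * u t := mul_lt_mul_of_pos_left hB hk₂
      have h1 : a t - k₂ * u t < -(k₂ * ε / 4) := by
        simp only [hBs] at hmul; nlinarith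
      nlinarith
  -- lower bound: eventually L - ε < u t
  have lower : ∀ᶠ t in atTop, L - ε < u t := by
    by_cases hm0 : L - 3/4 * ε ≤ 0
    · filter_upwards [eventually_ge_atTop (0:ℝ)] with t ht
      have := hupos t ht; linarith
    · push_neg at hm0
      set m := L - 3/4 * ε with hms
      obtain ⟨T₀, hT₀⟩ := eventually_atTop.1
        (halim.eventually_const_lt (show abar - k₂ * ε / 2 < abar by nlinarith))
      set T := max T₀ 0 with hTs
      have hT0 : (0:ℝ) ≤ T := le_max_right _ _
      have haT : ∀ t ≥ T, abar - k₂ * ε / 2 < a t :=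
        fun t ht => hT₀ t (le_trans (le_max_left _ _) ht)
      have key : ∀ t ≥ T, u t = m → 0 < (a t - k₂ * u t) * u t := by
        intro t ht hut
        have hu := hupos t (le_trans hT0 ht)
        have h1 : 0 < a t - k₂ * u t := by
          rw [hut]; simp only [hms]; nlinarith [haT t ht]
        exact mul_pos h1 hu
      by_cases hcase : ∃ t₀ ≥ T, m ≤ u t₀
      · obtain ⟨t₀, ht₀, hu₀⟩ := hcase
        have hbar := logistic_barrier (u := fun t => -u t)
          (f := fun t => -((a t - k₂ * u t) * u t)) (t₀ := t₀) (B := -m)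
          (fun t ht => (hode t (le_trans (le_trans hT0 ht₀) ht)).neg)
          (fun t ht hut => by
            simpa using key t (le_trans ht₀ ht) (neg_inj.mp hut))
          (by simpa using hu₀)
        filter_upwards [eventually_ge_atTop t₀] with t ht
        have := hbar t ht
        simp only [neg_le_neg_iff] at this
        simp only [hms] at this ⊢
        linarith
      · push_neg at hcase
        exfalso
        refine logistic_growth (c := k₂ * ε / 4) (m := m) (by positivity) hm0
          (fun t ht => hupos t (le_trans hT0 ht))
          (fun t ht => hode t (le_trans hT0 ht)) ?_ hcase
        intro t ht
        have hu := hupos t (le_trans hT0 ht)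
        have hB := hcase t ht
        have ha := haT t ht
        have hmul : k₂ * u t < k₂ * m := mul_lt_mul_of_pos_left hB hk₂
        have h1 : k₂ * ε / 4 < a t - k₂ * u t := by
          simp only [hms] at hmul; nlinarith
        nlinarith
  filter_upwards [upper, lower] with t h1 h2
  rw [Real.dist_eq, abs_lt]
  constructor <;> [linarith; linarith]
end

section
/- Non-autonomous linear ODE lemma: let A, B : [0,∞) → ℝ be continuous with A(t) → Ā and B(t) → B̄ as t → ∞, where B̄ > 0 and A is nonnegative, and let L : [0,∞) → [0,∞) be continuously differentiable and solve L'(t) = A(t) − B(t) L(t). Then L(t) → Ā/B̄ as t → ∞. -/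
open Filter Real Set

/-- If `L' = D ≤ a - b L` on `[T,∞)` with `b > 0`, then `L` decays toward `a/b`. -/
lemma decay_bound (L D : ℝ → ℝ) (a b T : ℝ) (hb : 0 < b)
    (hderiv : ∀ t ≥ T, HasDerivAt L (D t) t)
    (hineq : ∀ t ≥ T, D t ≤ a - b * L t) :
    ∀ t ≥ T, L t ≤ a / b + (L T - a / b) * Real.exp (-(b * (t - T))) := by
  set f : ℝ → ℝ := fun t => (L t - a / b) * Real.exp (b * (t - T)) with hf_def
  have hf : ∀ t ≥ T, HasDerivAt f ((D t - (a - b * L t)) * Real.exp (b * (t - T))) t := by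
    intro t ht
    have h1 : HasDerivAt (fun s => L s - a / b) (D t) t := (hderiv t ht).sub_const _
    have h0 : HasDerivAt (fun s : ℝ => b * (s - T)) b t := by
      simpa using ((hasDerivAt_id t).sub_const T).const_mul b
    have h2 : HasDerivAt (fun s : ℝ => Real.exp (b * (s - T)))
        (Real.exp (b * (t - T)) * b) t := h0.exp
    have h3 := h1.mul h2
    refine h3.congr_deriv ?_
    have hb' : b ≠ 0 := hb.ne'
    have hab : a / b * b = a := div_mul_cancel₀ a hb'
    linear_combination (-Real.exp (b * (t - T))) * hab
  have hcont : ContinuousOn f (Ici T) := fun t ht => ((hf t ht).continuousAt).continuousWithinAt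
  have hanti : AntitoneOn f (Ici T) := by
    apply antitoneOn_of_deriv_nonpos (convex_Ici T) hcont
    · intro t ht
      rw [interior_Ici] at ht
      exact ((hf t ht.le).differentiableAt).differentiableWithinAt
    · intro t ht
      rw [interior_Ici] at ht
      rw [(hf t ht.le).deriv]
      have h := hineq t ht.le
      exact mul_nonpos_of_nonpos_of_nonneg (by linarith) (Real.exp_pos _).le
  intro t ht
  have hft : f t ≤ f T := hanti self_mem_Ici ht ht
  have hfT : f T = L T - a / b := by simp [hf_def]
  have hkey : L t - a / b = f t * Real.exp (-(b * (t - T))) := by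
    rw [hf_def]
    simp only []
    rw [mul_assoc, ← Real.exp_add]
    simp
  have hErr : f t * Real.exp (-(b * (t - T))) ≤ (L T - a / b) * Real.exp (-(b * (t - T))) := by
    apply mul_le_mul_of_nonneg_right _ (Real.exp_pos _).le
    rw [← hfT]; exact hft
  linarith [hkey ▸ hErr]

lemma eventually_lt_of_decay (L D : ℝ → ℝ) (a b c T : ℝ) (hb : 0 < b)
    (hderiv : ∀ t ≥ T, HasDerivAt L (D t) t)
    (hineq : ∀ t ≥ T, D t ≤ a - b * L t)
    (hc : a / b < c) :
    ∀ᶠ t in Filter.atTop, L t < c := by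
  have hbd := decay_bound L D a b T hb hderiv hineq
  have h1 : Tendsto (fun t : ℝ => b * (t - T)) atTop atTop :=
    (tendsto_atTop_add_const_right _ (-T) tendsto_id).const_mul_atTop hb
  have h2 : Tendsto (fun t : ℝ => Real.exp (-(b * (t - T)))) atTop (nhds 0) :=
    Real.tendsto_exp_atBot.comp (tendsto_neg_atBot_iff.mpr h1)
  have h3 : Tendsto (fun t : ℝ => a / b + (L T - a / b) * Real.exp (-(b * (t - T))))
      atTop (nhds (a / b)) := by
    have h2' : Tendsto (fun t : ℝ => (L T - a / b) * Real.exp (-(b * (t - T)))) atTop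
        (nhds ((L T - a / b) * 0)) := tendsto_const_nhds.mul h2
    rw [mul_zero] at h2'
    simpa using (tendsto_const_nhds (x := a / b) (f := atTop)).add h2'
  have h4 : ∀ᶠ t in atTop, a / b + (L T - a / b) * Real.exp (-(b * (t - T))) < c :=
    h3.eventually_lt_const hc
  filter_upwards [h4, eventually_ge_atTop T] with t h4t hTt
  exact lt_of_le_of_lt (hbd t hTt) h4t

/-- Non-autonomous linear ODE lemma: if A(t) → Ā, B(t) → B̄ > 0, A ≥ 0, then the
nonnegative solution of L' = A(t) − B(t) L converges to Ā/B̄. -/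
theorem nonautonomous_linear_limit
    (A B L : ℝ → ℝ) (Abar Bbar : ℝ)
    (hAc : ContinuousOn A (Set.Ici 0)) (hBc : ContinuousOn B (Set.Ici 0))
    (hAlim : Filter.Tendsto A Filter.atTop (nhds Abar))
    (hBlim : Filter.Tendsto B Filter.atTop (nhds Bbar))
    (hBbar : 0 < Bbar)
    (hAnn : ∀ t ≥ (0:ℝ), 0 ≤ A t)
    (hLnn : ∀ t ≥ (0:ℝ), 0 ≤ L t)
    (hode : ∀ t ≥ (0:ℝ), HasDerivAt L (A t - B t * L t) t) :
    Filter.Tendsto L Filter.atTop (nhds (Abar / Bbar)) := by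
  rw [tendsto_order]
  constructor
  · -- lower bound: ∀ c < Abar/Bbar, eventually c < L t
    intro c hc
    -- choose δ > 0 with c < (Abar - δ)/(Bbar + δ)
    have hcont : ContinuousAt (fun δ : ℝ => (Abar - δ) / (Bbar + δ)) 0 := by
      apply ContinuousAt.div (continuousAt_const.sub continuousAt_id)
        (continuousAt_const.add continuousAt_id)
      simpa using hBbar.ne'
    have htend : Tendsto (fun δ : ℝ => (Abar - δ) / (Bbar + δ)) (nhdsWithin 0 (Ioi 0))
        (nhds (Abar / Bbar)) := by
      have := hcont.tendsto
      simp only [sub_zero, add_zero] at this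
      exact this.mono_left nhdsWithin_le_nhds
    have hev : ∀ᶠ δ in nhdsWithin (0:ℝ) (Ioi 0),
        c < (Abar - δ) / (Bbar + δ) ∧ δ ∈ Ioi (0:ℝ) :=
      (htend.eventually_const_lt hc).and self_mem_nhdsWithin
    obtain ⟨δ, hδc, hδpos⟩ := hev.exists
    have hδpos' : (0:ℝ) < δ := hδpos
    -- eventually A t ≥ Abar - δ and B t ≤ Bbar + δ
    have hA : ∀ᶠ t in atTop, Abar - δ < A t := hAlim.eventually_const_lt (by linarith)
    have hB : ∀ᶠ t in atTop, B t < Bbar + δ := hBlim.eventually_lt_const (by linarith)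
    obtain ⟨T, hT⟩ := eventually_atTop.1 ((hA.and hB).and (eventually_ge_atTop (0:ℝ)))
    have key := eventually_lt_of_decay (fun t => -L t) (fun t => -(A t - B t * L t))
      (-(Abar - δ)) (Bbar + δ) (-c) T (by linarith)
      (fun t ht => (hode t ((hT t ht).2)).neg)
      (fun t ht => by
        obtain ⟨⟨hAt, hBt⟩, ht0⟩ := hT t ht
        have hL0 := hLnn t ht0
        have hp : 0 ≤ (Bbar + δ - B t) * L t := mul_nonneg (by linarith) hL0
        beta_reduce
        nlinarith)
      (by rw [neg_div]; linarith)
    filter_upwards [key] with t h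
    linarith
  · -- upper bound: ∀ c > Abar/Bbar, eventually L t < c
    intro c hc
    have hcont : ContinuousAt (fun δ : ℝ => (Abar + δ) / (Bbar - δ)) 0 := by
      apply ContinuousAt.div (continuousAt_const.add continuousAt_id)
        (continuousAt_const.sub continuousAt_id)
      simpa using hBbar.ne'
    have htend : Tendsto (fun δ : ℝ => (Abar + δ) / (Bbar - δ)) (nhdsWithin 0 (Ioi 0))
        (nhds (Abar / Bbar)) := by
      have := hcont.tendsto
      simp only [add_zero, sub_zero] at this
      exact this.mono_left nhdsWithin_le_nhds
    have hev : ∀ᶠ δ in nhdsWithin (0:ℝ) (Ioi 0),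
        ((Abar + δ) / (Bbar - δ) < c ∧ δ < Bbar) ∧ δ ∈ Ioi (0:ℝ) := by
      refine Filter.Eventually.and (Filter.Eventually.and ?_ ?_) self_mem_nhdsWithin
      · exact htend.eventually_lt_const hc
      · exact eventually_nhdsWithin_of_eventually_nhds (eventually_lt_nhds hBbar)
    obtain ⟨δ, ⟨hδc, hδB⟩, hδpos⟩ := hev.exists
    have hδpos' : (0:ℝ) < δ := hδpos
    have hA : ∀ᶠ t in atTop, A t < Abar + δ := hAlim.eventually_lt_const (by linarith)
    have hB : ∀ᶠ t in atTop, Bbar - δ < B t := hBlim.eventually_const_lt (by linarith)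
    obtain ⟨T, hT⟩ := eventually_atTop.1 ((hA.and hB).and (eventually_ge_atTop (0:ℝ)))
    exact eventually_lt_of_decay L (fun t => A t - B t * L t)
      (Abar + δ) (Bbar - δ) c T (by linarith)
      (fun t ht => hode t ((hT t ht).2))
      (fun t ht => by
        obtain ⟨⟨hAt, hBt⟩, ht0⟩ := hT t ht
        have hL0 := hLnn t ht0
        have hp : 0 ≤ (B t - (Bbar - δ)) * L t := mul_nonneg (by linarith) hL0
        beta_reduce
        nlinarith)
      hδc
end

section
/- Extinction claim (step ii of the main theorem): let n : [0,∞)×[0,1] → [0,∞) be continuous, continuously differentiable in t, satisfy ∂n/∂t(t,x) = [r(x) − d(x)ρ(t) − μ(x)φ(t)] n(t,x) with ρ(t) = ∫₀¹ n(t,x) dx, where r, d, μ are continuous and positive on [0,1] and φ : [0,∞) → [0,∞) is continuous, and suppose ρ(t) → ρ^∞ and φ(t) → φ^∞ as t → ∞. If r(x) − d(x)ρ^∞ − μ(x)φ^∞ < 0 for every x ∈ [0,1], then ρ(t) → 0 as t → ∞ (hence ρ^∞ = 0). -/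
open Filter Real Set

/-- Step ii of the main theorem: if the asymptotic fitness is everywhere negative,
the tumour mass goes extinct. -/
theorem negative_fitness_extinction
    (n : ℝ → ℝ → ℝ) (r d μ : ℝ → ℝ) (ρ φ : ℝ → ℝ)
    (hrc : ContinuousOn r (Set.Icc 0 1)) (hdc : ContinuousOn d (Set.Icc 0 1))
    (hμc : ContinuousOn μ (Set.Icc 0 1))
    (hrpos : ∀ x ∈ Set.Icc (0:ℝ) 1, 0 < r x)
    (hdpos : ∀ x ∈ Set.Icc (0:ℝ) 1, 0 < d x)
    (hμpos : ∀ x ∈ Set.Icc (0:ℝ) 1, 0 < μ x)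
    (hφc : Continuous φ) (hφnn : ∀ t, 0 ≤ φ t)
    (hnnn : ∀ t ≥ (0:ℝ), ∀ x ∈ Set.Icc (0:ℝ) 1, 0 ≤ n t x)
    (hncont : ∀ t ≥ (0:ℝ), ContinuousOn (n t) (Set.Icc 0 1))
    (hnode : ∀ x ∈ Set.Icc (0:ℝ) 1, ∀ t > (0:ℝ),
      HasDerivAt (fun s => n s x) ((r x - d x * ρ t - μ x * φ t) * n t x) t)
    (hρdef : ∀ t, ρ t = ∫ x in (0:ℝ)..1, n t x)
    (ρinf φinf : ℝ)
    (hρlim : Filter.Tendsto ρ Filter.atTop (nhds ρinf))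
    (hφlim : Filter.Tendsto φ Filter.atTop (nhds φinf))
    (hneg : ∀ x ∈ Set.Icc (0:ℝ) 1, r x - d x * ρinf - μ x * φinf < 0) :
    Filter.Tendsto ρ Filter.atTop (nhds 0) := by
  -- the limiting fitness
  set g : ℝ → ℝ := fun x => r x - d x * ρinf - μ x * φinf with hg
  have hgc : ContinuousOn g (Set.Icc 0 1) :=
    (hrc.sub (hdc.mul continuousOn_const)).sub (hμc.mul continuousOn_const)
  obtain ⟨x0, hx0, hmax⟩ := isCompact_Icc.exists_isMaxOn (s := Set.Icc (0:ℝ) 1)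
    ⟨0, by norm_num⟩ hgc
  set ε : ℝ := -(g x0) with hε
  have hεpos : 0 < ε := by have := hneg x0 hx0; simp only [hε, hg]; linarith
  -- bound for d and μ
  obtain ⟨xd, hxd, hdmax⟩ := isCompact_Icc.exists_isMaxOn (s := Set.Icc (0:ℝ) 1)
    ⟨0, by norm_num⟩ hdc
  obtain ⟨xm, hxm, hmmax⟩ := isCompact_Icc.exists_isMaxOn (s := Set.Icc (0:ℝ) 1)
    ⟨0, by norm_num⟩ hμc
  set M : ℝ := max (d xd) (μ xm) with hM
  have hMpos : 0 < M := lt_of_lt_of_le (hdpos xd hxd) (le_max_left _ _)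
  have hdM : ∀ x ∈ Set.Icc (0:ℝ) 1, d x ≤ M := fun x hx =>
    le_trans (hdmax hx) (le_max_left _ _)
  have hμM : ∀ x ∈ Set.Icc (0:ℝ) 1, μ x ≤ M := fun x hx =>
    le_trans (hmmax hx) (le_max_right _ _)
  set δ : ℝ := ε / (4 * M) with hδ
  have hδpos : 0 < δ := div_pos hεpos (by linarith)
  obtain ⟨N1, hN1⟩ := Metric.tendsto_atTop.mp hρlim δ hδpos
  obtain ⟨N2, hN2⟩ := Metric.tendsto_atTop.mp hφlim δ hδpos
  set T : ℝ := max (max N1 N2) 1 with hT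
  have hT1 : (1:ℝ) ≤ T := le_max_right _ _
  have hT0 : (0:ℝ) < T := lt_of_lt_of_le one_pos hT1
  -- fitness bound for t ≥ T
  clear_value ε M δ T
  have hfit : ∀ t ≥ T, ∀ x ∈ Set.Icc (0:ℝ) 1, r x - d x * ρ t - μ x * φ t ≤ -(ε/2) := by
    intro t ht x hx
    have hTt : N1 ⊔ N2 ⊔ 1 ≤ t := hT ▸ ht
    have hρt : dist (ρ t) ρinf < δ :=
      hN1 t (le_trans (le_trans (le_max_left _ _) (le_max_left _ _)) hTt)
    have hφt : dist (φ t) φinf < δ :=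
      hN2 t (le_trans (le_trans (le_max_right _ _) (le_max_left _ _)) hTt)
    have hρt' : ρinf - ρ t ≤ δ := by
      rw [Real.dist_eq, abs_lt] at hρt; linarith [hρt.1]
    have hφt' : φinf - φ t ≤ δ := by
      rw [Real.dist_eq, abs_lt] at hφt; linarith [hφt.1]
    have hgle : g x ≤ -ε := by
      have h := hmax hx
      simp only [Set.mem_setOf_eq] at h
      simp only [hε, neg_neg]
      exact h
    have h1 : d x * (ρinf - ρ t) ≤ M * δ := by
      rcases le_or_gt (ρinf - ρ t) 0 with h | h
      · exact le_trans (mul_nonpos_of_nonneg_of_nonpos (le_of_lt (hdpos x hx)) h)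
          (by positivity)
      · exact mul_le_mul (hdM x hx) hρt' (le_of_lt h) (le_of_lt hMpos)
    have h2 : μ x * (φinf - φ t) ≤ M * δ := by
      rcases le_or_gt (φinf - φ t) 0 with h | h
      · exact le_trans (mul_nonpos_of_nonneg_of_nonpos (le_of_lt (hμpos x hx)) h)
          (by positivity)
      · exact mul_le_mul (hμM x hx) hφt' (le_of_lt h) (le_of_lt hMpos)
    have hMδ : M * δ = ε / 4 := by
      have hM0 : M ≠ 0 := ne_of_gt hMpos
      rw [hδ]; field_simp
    have h1' : d x * (ρinf - ρ t) ≤ ε / 4 := hMδ ▸ h1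
    have h2' : μ x * (φinf - φ t) ≤ ε / 4 := hMδ ▸ h2
    have key : r x - d x * ρ t - μ x * φ t
        = g x + d x * (ρinf - ρ t) + μ x * (φinf - φ t) := by simp only [hg]; ring
    rw [key]
    linarith
  -- exponential decay of n
  have hdecay : ∀ x ∈ Set.Icc (0:ℝ) 1, ∀ t ≥ T,
      n t x ≤ n T x * Real.exp (ε/2 * (T - t)) := by
    intro x hx t ht
    set f : ℝ → ℝ := fun s => n s x * Real.exp (ε/2 * s) with hf
    have hderiv : ∀ s, 0 < s → HasDerivAt f
        (((r x - d x * ρ s - μ x * φ s) + ε/2) * n s x * Real.exp (ε/2 * s)) s := by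
      intro s hs
      have h1 := hnode x hx s hs
      have h2 : HasDerivAt (fun s : ℝ => Real.exp (ε/2 * s))
          (Real.exp (ε/2 * s) * (ε/2)) s := by
        have : HasDerivAt (fun s : ℝ => ε/2 * s) (ε/2) s := by
          simpa using (hasDerivAt_id s).const_mul (ε/2)
        exact this.exp
      have : HasDerivAt f ((r x - d x * ρ s - μ x * φ s) * n s x * Real.exp (ε/2 * s)
          + n s x * (Real.exp (ε/2 * s) * (ε/2))) s := h1.fun_mul h2
      convert this using 1
      ring
    have hcont : ContinuousOn f (Set.Ici T) := by
      intro s hs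
      exact ((hderiv s (lt_of_lt_of_le hT0 hs)).differentiableAt.continuousAt).continuousWithinAt
    have hanti : AntitoneOn f (Set.Ici T) := by
      apply antitoneOn_of_deriv_nonpos (convex_Ici T) hcont
      · intro s hs
        rw [interior_Ici] at hs
        exact (hderiv s (lt_trans hT0 hs)).differentiableAt.differentiableWithinAt
      · intro s hs
        rw [interior_Ici] at hs
        rw [(hderiv s (lt_trans hT0 hs)).deriv]
        have hF := hfit s (le_of_lt hs) x hx
        have hn0 : 0 ≤ n s x := hnnn s (le_of_lt (lt_trans hT0 hs)) x hx
        have hexp : (0:ℝ) < Real.exp (ε/2 * s) := Real.exp_pos _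
        have : (r x - d x * ρ s - μ x * φ s + ε/2) ≤ 0 := by linarith
        have h1 : (r x - d x * ρ s - μ x * φ s + ε/2) * n s x ≤ 0 :=
          mul_nonpos_of_nonpos_of_nonneg this hn0
        exact mul_nonpos_of_nonpos_of_nonneg h1 (le_of_lt hexp)
    have h2 : n t x * Real.exp (ε/2 * t) ≤ n T x * Real.exp (ε/2 * T) :=
      hanti Set.self_mem_Ici (Set.mem_Ici.mpr ht) ht
    have h3 : n T x * Real.exp (ε/2 * (T - t)) * Real.exp (ε/2 * t)
        = n T x * Real.exp (ε/2 * T) := by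
      rw [mul_assoc, ← Real.exp_add]
      ring_nf
    rw [← h3] at h2
    exact (mul_le_mul_iff_of_pos_right (Real.exp_pos (ε/2 * t))).mp h2
  -- integrate the decay
  have hρbound : ∀ t ≥ T, ρ t ≤ ρ T * Real.exp (ε/2 * (T - t)) := by
    intro t ht
    have ht0 : (0:ℝ) ≤ t := le_trans (le_of_lt hT0) ht
    have hint1 : IntervalIntegrable (n t) MeasureTheory.volume 0 1 := by
      apply ContinuousOn.intervalIntegrable
      rw [Set.uIcc_of_le (by norm_num : (0:ℝ) ≤ 1)]
      exact hncont t ht0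
    have hint2 : IntervalIntegrable (fun x => n T x * Real.exp (ε/2 * (T - t)))
        MeasureTheory.volume 0 1 := by
      apply ContinuousOn.intervalIntegrable
      rw [Set.uIcc_of_le (by norm_num : (0:ℝ) ≤ 1)]
      exact (hncont T (le_of_lt hT0)).mul continuousOn_const
    have hmono := intervalIntegral.integral_mono_on (by norm_num : (0:ℝ) ≤ 1)
      hint1 hint2 (fun x hx => hdecay x hx t ht)
    rw [hρdef t, hρdef T]
    calc ∫ x in (0:ℝ)..1, n t x
        ≤ ∫ x in (0:ℝ)..1, n T x * Real.exp (ε/2 * (T - t)) := hmono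
      _ = (∫ x in (0:ℝ)..1, n T x) * Real.exp (ε/2 * (T - t)) := by
          rw [intervalIntegral.integral_mul_const]
  -- squeeze
  have hupper : Filter.Tendsto (fun t => ρ T * Real.exp (ε/2 * (T - t)))
      Filter.atTop (nhds 0) := by
    have h1 : Filter.Tendsto (fun t : ℝ => ε/2 * (T - t)) Filter.atTop Filter.atBot := by
      apply Filter.Tendsto.const_mul_atBot (half_pos hεpos)
      exact Filter.tendsto_atBot_add_const_left _ T tendsto_neg_atTop_atBot
    have h2 := Real.tendsto_exp_atBot.comp h1
    have := h2.const_mul (ρ T)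
    simpa using this
  have hlower : ∀ᶠ t in Filter.atTop, 0 ≤ ρ t := by
    filter_upwards [Filter.eventually_ge_atTop (0:ℝ)] with t ht
    rw [hρdef t]
    exact intervalIntegral.integral_nonneg (by norm_num) (fun x hx => hnnn t ht x hx)
  have hup : ∀ᶠ t in Filter.atTop, ρ t ≤ ρ T * Real.exp (ε/2 * (T - t)) := by
    filter_upwards [Filter.eventually_ge_atTop T] with t ht
    exact hρbound t ht
  exact tendsto_of_tendsto_of_tendsto_of_le_of_le' tendsto_const_nhds hupper hlower hup
end
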